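/- arXiv:1703.00823 — 2 statements merged into one kernel-verified Lean document; each statement's English description precedes it below -/
import Mathlib

section
/- Let d ≥ 2, let K be a number field, and let S be the set of primes of K dividing (2d−2)!, together with all archimedean places. Then GR_d^1[2d](K,S)/PGL_2(R_S) is infinite: the triples (f_a, X, X), where f_a(x) = a·x(x−1)⋯(x−d+1)/((x+1)⋯(x+d−1)) for a ∈ R_S^× and X = {0,1,…,d−1} ∪ {−1,…,−(d−1)} ∪ {∞}, lie in GR_d^1[2d](K,S) and represent infinitely many distinct PGL_2(R_S)-conjugacy classes. -/
open Polynomial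
open scoped Classical

noncomputable section

/-- The projective line over `L`: `L` together with a point at infinity (`none`). -/
abbrev ProjLine (L : Type*) := Option L

namespace ProjLine

variable {L : Type*} [Field L]

/-- Value of the rational map `p/q` at a finite point `x`. -/
def evalAt (p q : L[X]) (x : L) : ProjLine L :=
  if q.eval x = 0 then none else some (p.eval x / q.eval x)

/-- Value at a point of the projective line of the degree-`d` morphism whose
dehomogenized description is the pair `(p, q)` (i.e. the morphism
`[Y^d·p(X/Y) : Y^d·q(X/Y)]` in homogeneous coordinates). -/
def eval (d : ℕ) (p q : L[X]) : ProjLine L → ProjLine L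
  | some x => evalAt p q x
  | none => evalAt (p.reflect d) (q.reflect d) 0

/-- Ramification index of `p/q` at a finite point `x`. -/
def ramAt (p q : L[X]) (x : L) : ℕ :=
  if q.eval x = 0 then rootMultiplicity x q
  else rootMultiplicity x (C (q.eval x) * p - C (p.eval x) * q)

/-- Ramification index at a point of the projective line of the degree-`d` morphism
with dehomogenized description `(p, q)`. -/
def ram (d : ℕ) (p q : L[X]) : ProjLine L → ℕ
  | some x => ramAt p q x
  | none => ramAt (p.reflect d) (q.reflect d) 0

/-- The Möbius transformation of the projective line attached to a 2×2 matrix. -/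
def mobius (M : Matrix (Fin 2) (Fin 2) L) : ProjLine L → ProjLine L
  | some x => if M 1 0 * x + M 1 1 = 0 then none
      else some ((M 0 0 * x + M 0 1) / (M 1 0 * x + M 1 1))
  | none => if M 1 0 = 0 then none else some (M 0 0 / M 1 0)

/-- The Sylvester matrix of the binary forms of degrees `d` and `e` whose
dehomogenizations are `p` and `q`. -/
def sylvester (d e : ℕ) (p q : L[X]) : Matrix (Fin (e + d)) (Fin (e + d)) L :=
  Matrix.of fun i j =>
    if (i : ℕ) < e then
      (if (i : ℕ) ≤ (j : ℕ) ∧ (j : ℕ) ≤ (i : ℕ) + d then p.coeff (d + (i : ℕ) - (j : ℕ)) else 0)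
    else
      (if (i : ℕ) - e ≤ (j : ℕ) ∧ (j : ℕ) ≤ ((i : ℕ) - e) + e then
        q.coeff (e + ((i : ℕ) - e) - (j : ℕ)) else 0)

/-- The resultant of the binary forms of degrees `d` and `e` whose dehomogenizations
are `p` and `q`, as a Sylvester determinant. -/
def resultant (d e : ℕ) (p q : L[X]) : L := (sylvester d e p q).det

/-- Reduction of a point of the projective line over `L` modulo (the maximal ideal of)
a valuation subring `O` of `L`. -/
def red (O : ValuationSubring L) : ProjLine L → ProjLine (IsLocalRing.ResidueField ↥O)
  | some x => if h : x ∈ O then some (IsLocalRing.residue ↥O ⟨x, h⟩) else none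
  | none => none

end ProjLine

/-- A pair of polynomials `(p, q)` over a field is the (dehomogenized) description of a
morphism `P¹ → P¹` of degree `d`:  `p` and `q` are coprime, have degree at most `d`,
and at least one of them has degree exactly `d`. -/
def IsRatMapOfDeg {F : Type*} [Field F] (d : ℕ) (p q : F[X]) : Prop :=
  IsCoprime p q ∧ p.natDegree ≤ d ∧ q.natDegree ≤ d ∧ (p.natDegree = d ∨ q.natDegree = d)

open IsDedekindDomain NumberField

/-- The finite places of a number field `K`, i.e. the nonzero primes of its ring of
integers.  (Archimedean places impose no good-reduction conditions, so a finite set `S`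
of places containing all archimedean ones is modelled by its finite set of
nonarchimedean members.) -/
abbrev NFPlace (K : Type*) [Field K] [NumberField K] := HeightOneSpectrum (𝓞 K)

variable {K : Type*} [Field K] [NumberField K]

/-- `x ∈ R_S`: `x` is integral at every place outside `S`. -/
def SInteger (S : Set (NFPlace K)) (x : K) : Prop :=
  ∀ v : NFPlace K, v ∉ S → v.valuation K x ≤ 1

/-- `x ∈ R_S^×`: `x` is a unit at every place outside `S`. -/
def SUnit (S : Set (NFPlace K)) (x : K) : Prop :=
  x ≠ 0 ∧ ∀ v : NFPlace K, v ∉ S → v.valuation K x = 1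

section Ext

variable {Kb : Type*} [Field Kb] [Algebra K Kb]

/-- A valuation subring `O` of an extension `Kb` of `K` lies over the place `v` of `K`
if its restriction to `K` is exactly the valuation ring of `v`. -/
def LiesOver (O : ValuationSubring Kb) (v : NFPlace K) : Prop :=
  ∀ x : K, algebraMap K Kb x ∈ O ↔ v.valuation K x ≤ 1

/-- A set `X` of points of the projective line over an extension of `K` has good
reduction outside `S` if for every place `v ∉ S` and every extension of `v`
(i.e. every valuation subring lying over `v`), reduction is injective on `X`. -/
def GoodRedPoints (S : Set (NFPlace K)) (X : Set (ProjLine Kb)) : Prop :=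
  ∀ v : NFPlace K, v ∉ S → ∀ O : ValuationSubring Kb, LiesOver O v →
    Set.InjOn (ProjLine.red O) X

/-- `X` is stable under the action of `Gal(Kb/K)`. -/
def GalInvariant (X : Set (ProjLine Kb)) : Prop :=
  ∀ σ : Kb ≃ₐ[K] Kb, ∀ P ∈ X, Option.map (⇑σ) P ∈ X

end Ext

variable (K) in
/-- A triple `(f, Y, X)` consisting of (the dehomogenized description of) a rational
map and two sets of points of `P¹(K̄)`. -/
structure DynTriple where
  p : K[X]
  q : K[X]
  Y : Set (ProjLine (AlgebraicClosure K))
  X : Set (ProjLine (AlgebraicClosure K))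

/-- Base change of a polynomial over `K` to the algebraic closure. -/
def polyBar (p : K[X]) : (AlgebraicClosure K)[X] := p.map (algebraMap K (AlgebraicClosure K))

/-- Base change of a matrix over `K` to the algebraic closure. -/
def matBar (M : Matrix (Fin 2) (Fin 2) K) : Matrix (Fin 2) (Fin 2) (AlgebraicClosure K) :=
  M.map (algebraMap K (AlgebraicClosure K))

/-- `f` (given by the pair `(p,q)` of degree `d`) has simple good reduction outside `S`:
some `PGL₂(K)`-conjugate of `f` is given by a pair of `S`-integral polynomials whose
resultant is an `S`-unit. -/
def SimpleGoodRed (S : Set (NFPlace K)) (d : ℕ) (p q : K[X]) : Prop :=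
  ∃ (M : Matrix (Fin 2) (Fin 2) K) (p' q' : K[X]),
    M.det ≠ 0 ∧
    IsRatMapOfDeg d p' q' ∧
    (∀ n, SInteger S (p'.coeff n)) ∧ (∀ n, SInteger S (q'.coeff n)) ∧
    SUnit S (ProjLine.resultant d d p' q') ∧
    ∀ P : ProjLine K,
      ProjLine.mobius M (ProjLine.eval d p' q' P)
        = ProjLine.eval d p q (ProjLine.mobius M P)

/-- Membership in `𝐺𝑅̃¹_d[n](K,S)`:  `(f, Y, X)` with `f` of degree `d`, `X = Y ∪ f(Y)`
finite and Galois invariant, total ramification weight `n` on `Y`, and `X` of good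
reduction outside `S`.  (No good-reduction requirement on `f` itself.) -/
def MemGRtilde (S : Set (NFPlace K)) (d n : ℕ) (t : DynTriple K) : Prop :=
  IsRatMapOfDeg d t.p t.q ∧
  t.Y.Finite ∧
  t.X = t.Y ∪ (ProjLine.eval d (polyBar t.p) (polyBar t.q) '' t.Y) ∧
  GalInvariant (K := K) t.X ∧
  (∑ᶠ P ∈ t.Y, ProjLine.ram d (polyBar t.p) (polyBar t.q) P) = n ∧
  GoodRedPoints S t.X

/-- Membership in `𝐺𝑅¹_d[n](K,S)`: as in `MemGRtilde`, and in addition `f` has simple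
good reduction outside `S`. -/
def MemGR (S : Set (NFPlace K)) (d n : ℕ) (t : DynTriple K) : Prop :=
  MemGRtilde S d n t ∧ SimpleGoodRed S d t.p t.q

/-- Two triples are `PGL₂(R_S)`-equivalent:  `t' = φ⁻¹ ∘ t ∘ φ` for some `φ = M` with
`S`-integral entries and `S`-unit determinant. -/
def TripleEquiv (S : Set (NFPlace K)) (d : ℕ) (t t' : DynTriple K) : Prop :=
  ∃ M : Matrix (Fin 2) (Fin 2) K,
    (∀ i j, SInteger S (M i j)) ∧ SUnit S M.det ∧
    (∀ P, ProjLine.mobius (matBar M) (ProjLine.eval d (polyBar t'.p) (polyBar t'.q) P)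
        = ProjLine.eval d (polyBar t.p) (polyBar t.q) (ProjLine.mobius (matBar M) P)) ∧
    ProjLine.mobius (matBar M) '' t'.Y = t.Y ∧
    ProjLine.mobius (matBar M) '' t'.X = t.X

end

noncomputable section
open Polynomial

/-- Numerator `a·x(x-1)(x-2)⋯(x-d+1)` of the map `f_a` of Proposition 4.1. -/
def fNum (L : Type*) [Field L] (d : ℕ) (a : L) : L[X] :=
  C a * ∏ i ∈ Finset.range d, (X - C ((i : ℕ) : L))

/-- Denominator `(x+1)(x+2)⋯(x+d-1)` of the map `f_a` of Proposition 4.1. -/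
def fDen (L : Type*) [Field L] (d : ℕ) : L[X] :=
  ∏ i ∈ Finset.range (d - 1), (X + C ((i + 1 : ℕ) : L))

/-- The set `X = {0, ±1, ±2, …, ±(d-1)} ∪ {∞}` of `2d` points of Proposition 4.1. -/
def stdSet (L : Type*) [Field L] (d : ℕ) : Set (ProjLine L) :=
  insert (none : ProjLine L)
    ((fun m : ℤ => (some ((m : ℤ) : L) : ProjLine L)) '' Set.Icc (-(d : ℤ) + 1) ((d : ℤ) - 1))

end

noncomputable section
open Polynomial IsDedekindDomain NumberField

noncomputable section
namespace ProjLine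
open Matrix
variable {L : Type*} [Field L]

lemma mobius_one (P : ProjLine L) : mobius (1 : Matrix (Fin 2) (Fin 2) L) P = P := by
  cases P with
  | none => simp [mobius, Matrix.one_apply]
  | some x => simp [mobius, Matrix.one_apply]

lemma mobius_mul (A B : Matrix (Fin 2) (Fin 2) L) (hB : B.det ≠ 0) (P : ProjLine L) :
    mobius (A * B) P = mobius A (mobius B P) := by
  rw [Matrix.det_fin_two] at hB
  cases P with
  | some x =>
    by_cases hb : B 1 0 * x + B 1 1 = 0
    · have hc : B 0 0 * x + B 0 1 ≠ 0 := by
        intro hc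
        exact hB (by linear_combination B 0 0 * hb - B 1 0 * hc)
      have e1 : mobius B (some x) = none := by simp [mobius, hb]
      rw [e1]
      have hD : (A * B) 1 0 * x + (A * B) 1 1 = A 1 0 * (B 0 0 * x + B 0 1) := by
        simp only [Matrix.mul_apply, Fin.sum_univ_two]
        linear_combination A 1 1 * hb
      have hN : (A * B) 0 0 * x + (A * B) 0 1 = A 0 0 * (B 0 0 * x + B 0 1) := by
        simp only [Matrix.mul_apply, Fin.sum_univ_two]
        linear_combination A 0 1 * hb
      show (if (A * B) 1 0 * x + (A * B) 1 1 = 0 then none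
          else some (((A * B) 0 0 * x + (A * B) 0 1) / ((A * B) 1 0 * x + (A * B) 1 1)))
        = mobius A none
      rw [hD, hN]
      rcases eq_or_ne (A 1 0) 0 with h10 | h10
      · simp [mobius, h10]
      · simp only [mobius, if_neg (mul_ne_zero h10 hc), if_neg h10]
        rw [mul_div_mul_right _ _ hc]
    · have e1 : mobius B (some x) = some ((B 0 0 * x + B 0 1) / (B 1 0 * x + B 1 1)) := by
        simp [mobius, hb]
      rw [e1]
      have hD : A 1 0 * ((B 0 0 * x + B 0 1) / (B 1 0 * x + B 1 1)) + A 1 1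
          = ((A * B) 1 0 * x + (A * B) 1 1) / (B 1 0 * x + B 1 1) := by
        simp only [Matrix.mul_apply, Fin.sum_univ_two]
        rw [eq_div_iff hb, add_mul, mul_assoc, div_mul_cancel₀ _ hb]
        ring
      have hN : A 0 0 * ((B 0 0 * x + B 0 1) / (B 1 0 * x + B 1 1)) + A 0 1
          = ((A * B) 0 0 * x + (A * B) 0 1) / (B 1 0 * x + B 1 1) := by
        simp only [Matrix.mul_apply, Fin.sum_univ_two]
        rw [eq_div_iff hb, add_mul, mul_assoc, div_mul_cancel₀ _ hb]
        ring
      show (if (A * B) 1 0 * x + (A * B) 1 1 = 0 then none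
          else some (((A * B) 0 0 * x + (A * B) 0 1) / ((A * B) 1 0 * x + (A * B) 1 1)))
        = mobius A (some ((B 0 0 * x + B 0 1) / (B 1 0 * x + B 1 1)))
      show _ = if A 1 0 * ((B 0 0 * x + B 0 1) / (B 1 0 * x + B 1 1)) + A 1 1 = 0 then none
          else some ((A 0 0 * ((B 0 0 * x + B 0 1) / (B 1 0 * x + B 1 1)) + A 0 1)
            / (A 1 0 * ((B 0 0 * x + B 0 1) / (B 1 0 * x + B 1 1)) + A 1 1))
      rw [hD, hN, _root_.div_eq_zero_iff]
      rcases eq_or_ne ((A * B) 1 0 * x + (A * B) 1 1) 0 with hD0 | hD0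
      · simp [hD0]
      · rw [if_neg hD0, if_neg (by tauto)]
        congr 1
        rw [div_div_div_cancel_right₀ hb]
  | none =>
    by_cases h10 : B 1 0 = 0
    · have hB00 : B 0 0 ≠ 0 := by
        intro h
        exact hB (by rw [h, h10]; ring)
      have e1 : mobius B none = none := by simp [mobius, h10]
      rw [e1]
      show (if (A * B) 1 0 = 0 then none else some ((A * B) 0 0 / (A * B) 1 0)) = mobius A none
      have d1 : (A * B) 1 0 = A 1 0 * B 0 0 := by
        simp [Matrix.mul_apply, Fin.sum_univ_two, h10]
      have d2 : (A * B) 0 0 = A 0 0 * B 0 0 := by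
        simp [Matrix.mul_apply, Fin.sum_univ_two, h10]
      rw [d1, d2]
      rcases eq_or_ne (A 1 0) 0 with h | h
      · simp [mobius, h]
      · simp only [mobius, if_neg (mul_ne_zero h hB00), if_neg h]
        rw [mul_div_mul_right _ _ hB00]
    · have e1 : mobius B none = some (B 0 0 / B 1 0) := by simp [mobius, h10]
      rw [e1]
      have hD : A 1 0 * (B 0 0 / B 1 0) + A 1 1 = (A * B) 1 0 / B 1 0 := by
        simp only [Matrix.mul_apply, Fin.sum_univ_two]
        field_simp
      have hN : A 0 0 * (B 0 0 / B 1 0) + A 0 1 = (A * B) 0 0 / B 1 0 := by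
        simp only [Matrix.mul_apply, Fin.sum_univ_two]
        field_simp
      show (if (A * B) 1 0 = 0 then none else some ((A * B) 0 0 / (A * B) 1 0))
        = if A 1 0 * (B 0 0 / B 1 0) + A 1 1 = 0 then none
          else some ((A 0 0 * (B 0 0 / B 1 0) + A 0 1) / (A 1 0 * (B 0 0 / B 1 0) + A 1 1))
      rw [hD, hN, _root_.div_eq_zero_iff]
      rcases eq_or_ne ((A * B) 1 0) 0 with hD0 | hD0
      · simp [hD0]
      · rw [if_neg hD0, if_neg (by tauto)]
        congr 1
        field_simp

end ProjLine
end
noncomputable section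
namespace ProjLine
open Matrix
variable {L : Type*} [Field L]

lemma mobius_inv_left {A : Matrix (Fin 2) (Fin 2) L} (hA : A.det ≠ 0) (P : ProjLine L) :
    mobius A⁻¹ (mobius A P) = P := by
  rw [← mobius_mul _ _ hA, Matrix.nonsing_inv_mul A (isUnit_iff_ne_zero.2 hA), mobius_one]

lemma mobius_inv_right {A : Matrix (Fin 2) (Fin 2) L} (hA : A.det ≠ 0) (P : ProjLine L) :
    mobius A (mobius A⁻¹ P) = P := by
  have hA' : (A⁻¹).det ≠ 0 := by
    rw [Matrix.det_nonsing_inv, Ring.inverse_eq_inv]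
    exact inv_ne_zero hA
  rw [← mobius_mul _ _ hA', Matrix.mul_nonsing_inv A (isUnit_iff_ne_zero.2 hA), mobius_one]

lemma mobius_injective {A : Matrix (Fin 2) (Fin 2) L} (hA : A.det ≠ 0) :
    Function.Injective (mobius A) :=
  Function.LeftInverse.injective (mobius_inv_left hA)

lemma mobius_surjective {A : Matrix (Fin 2) (Fin 2) L} (hA : A.det ≠ 0) :
    Function.Surjective (mobius A) :=
  Function.RightInverse.surjective (mobius_inv_right hA)

/-- Fixed finite point equation. -/
lemma eq_of_mobius_fix {A : Matrix (Fin 2) (Fin 2) L} {x : L}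
    (h : mobius A (some x) = some x) :
    A 0 0 * x + A 0 1 = x * (A 1 0 * x + A 1 1) := by
  by_cases hb : A 1 0 * x + A 1 1 = 0
  · simp [mobius, hb] at h
  · simp only [mobius, if_neg hb, Option.some.injEq] at h
    rw [div_eq_iff hb] at h
    linear_combination h

lemma mobius_none_fix {A : Matrix (Fin 2) (Fin 2) L} (h : mobius A none = none) :
    A 1 0 = 0 := by
  by_contra hc
  simp [mobius, hc] at h

lemma mobius_eq_id_of_fix_three {A : Matrix (Fin 2) (Fin 2) L} (hA : A.det ≠ 0)
    {P₁ P₂ P₃ : ProjLine L} (h12 : P₁ ≠ P₂) (h13 : P₁ ≠ P₃) (h23 : P₂ ≠ P₃)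
    (f1 : mobius A P₁ = P₁) (f2 : mobius A P₂ = P₂) (f3 : mobius A P₃ = P₃)
    (P : ProjLine L) : mobius A P = P := by
  rw [Matrix.det_fin_two] at hA
  suffices h : A 1 0 = 0 ∧ A 0 1 = 0 ∧ A 1 1 = A 0 0 by
    obtain ⟨hc, hb, he⟩ := h
    have ha : A 0 0 ≠ 0 := fun h0 => hA (by rw [hc, hb, he, h0]; ring)
    cases P with
    | none => simp [mobius, hc]
    | some x =>
      simp only [mobius, hc, hb, he, zero_mul, zero_add, add_zero, if_neg ha,
        Option.some.injEq]
      field_simp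
  have two_fin : ∀ x y : L, x ≠ y → A 1 0 = 0 →
      A 0 0 * x + A 0 1 = x * (A 1 0 * x + A 1 1) →
      A 0 0 * y + A 0 1 = y * (A 1 0 * y + A 1 1) →
      A 1 0 = 0 ∧ A 0 1 = 0 ∧ A 1 1 = A 0 0 := by
    intro x y hxy hc ex ey
    rw [hc] at ex ey
    have h1 : (A 0 0 - A 1 1) * (x - y) = 0 := by linear_combination ex - ey
    have h2 : A 0 0 - A 1 1 = 0 := by
      rcases mul_eq_zero.1 h1 with h | h
      · exact h
      · exact absurd (sub_eq_zero.1 h) hxy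
    refine ⟨hc, ?_, ?_⟩
    · linear_combination ex - x * h2
    · linear_combination -h2
  rcases P₁ with _ | x₁ <;> rcases P₂ with _ | x₂ <;> rcases P₃ with _ | x₃
  · exact absurd rfl h12
  · exact absurd rfl h12
  · exact absurd rfl h13
  · -- none, some x₂, some x₃
    have hc := mobius_none_fix f1
    exact two_fin x₂ x₃ (fun h => h23 (by rw [h])) hc (eq_of_mobius_fix f2)
      (eq_of_mobius_fix f3)
  · exact absurd rfl h23
  · have hc := mobius_none_fix f2
    exact two_fin x₁ x₃ (fun h => h13 (by rw [h])) hc (eq_of_mobius_fix f1)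
      (eq_of_mobius_fix f3)
  · have hc := mobius_none_fix f3
    exact two_fin x₁ x₂ (fun h => h12 (by rw [h])) hc (eq_of_mobius_fix f1)
      (eq_of_mobius_fix f2)
  · have e1 := eq_of_mobius_fix f1
    have e2 := eq_of_mobius_fix f2
    have e3 := eq_of_mobius_fix f3
    have hx12 : x₁ ≠ x₂ := fun h => h12 (by rw [h])
    have hx13 : x₁ ≠ x₃ := fun h => h13 (by rw [h])
    have hx23 : x₂ ≠ x₃ := fun h => h23 (by rw [h])
    have r12 : (A 0 0 - A 1 0 * (x₁ + x₂) - A 1 1) * (x₁ - x₂) = 0 := by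
      linear_combination e1 - e2
    have r13 : (A 0 0 - A 1 0 * (x₁ + x₃) - A 1 1) * (x₁ - x₃) = 0 := by
      linear_combination e1 - e3
    have s12 : A 0 0 - A 1 0 * (x₁ + x₂) - A 1 1 = 0 :=
      (mul_eq_zero.1 r12).resolve_right fun h => hx12 (sub_eq_zero.1 h)
    have s13 : A 0 0 - A 1 0 * (x₁ + x₃) - A 1 1 = 0 :=
      (mul_eq_zero.1 r13).resolve_right fun h => hx13 (sub_eq_zero.1 h)
    have hc0 : A 1 0 * (x₃ - x₂) = 0 := by linear_combination s12 - s13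
    have hc : A 1 0 = 0 :=
      (mul_eq_zero.1 hc0).resolve_right fun h => hx23 ((sub_eq_zero.1 h).symm)
    exact two_fin x₁ x₂ hx12 hc e1 e2

end ProjLine
end
noncomputable section
open Polynomial

/-- The Sylvester determinant of a coprime pair is nonzero. -/
lemma sylvester_det_ne_zero {F : Type*} [Field F] {d e : ℕ} {p q : F[X]}
    (hcop : IsCoprime p q) (hp : p.natDegree = d) (hq : q.natDegree ≤ e)
    (hd : 0 < d) (he : 0 < e) :
    (ProjLine.sylvester d e p q).det ≠ 0 := by
  intro hdet
  obtain ⟨v, hv0, hv⟩ := Matrix.exists_vecMul_eq_zero_iff.2 hdet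
  have hv' : ∀ j : Fin (e + d), ∑ i : Fin (e + d), v i * ProjLine.sylvester d e p q i j = 0 := by
    intro j
    have := congrFun hv j
    rw [Matrix.vecMul, dotProduct] at this
    simpa using this
  set v' : ℕ → F := fun m => if h : m < e + d then v ⟨m, h⟩ else 0 with hv'def
  set A : F[X] := ∑ i ∈ Finset.range e, C (v' i) * X ^ (e - 1 - i) with hA
  set B : F[X] := ∑ i ∈ Finset.range d, C (v' (e + i)) * X ^ (d - 1 - i) with hB
  have hdegA : A.natDegree ≤ e - 1 :=
    Polynomial.natDegree_sum_le_of_forall_le _ _ fun i hi =>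
      le_trans (Polynomial.natDegree_C_mul_X_pow_le _ _) (by omega)
  have hdegB : B.natDegree ≤ d - 1 :=
    Polynomial.natDegree_sum_le_of_forall_le _ _ fun i hi =>
      le_trans (Polynomial.natDegree_C_mul_X_pow_le _ _) (by omega)
  have key : ∀ j : Fin (e + d), (A * p + B * q).coeff (e + d - 1 - (j : ℕ)) = 0 := by
    intro j
    have hj : (j : ℕ) < e + d := j.isLt
    have hAp : ∀ i ∈ Finset.range e,
        (C (v' i) * X ^ (e - 1 - i) * p).coeff (e + d - 1 - (j : ℕ))
        = v' i * (if i ≤ (j : ℕ) ∧ (j : ℕ) ≤ i + d then p.coeff (d + i - (j : ℕ)) else 0) := by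
      intro i hi
      rw [Finset.mem_range] at hi
      rw [mul_assoc, mul_comm (X ^ (e - 1 - i)) p, ← mul_assoc,
        Polynomial.coeff_mul_X_pow', Polynomial.coeff_C_mul]
      by_cases hcase : (j : ℕ) ≤ i + d
      · rw [if_pos (by omega)]
        by_cases hij : i ≤ (j : ℕ)
        · rw [if_pos ⟨hij, hcase⟩]
          congr 2
          omega
        · rw [if_neg (by tauto), mul_zero,
            Polynomial.coeff_eq_zero_of_natDegree_lt (show p.natDegree < e + d - 1 - (j:ℕ) - (e - 1 - i) by omega),
            mul_zero]
      · rw [if_neg (by omega), if_neg (by tauto), mul_zero]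
    have hBq : ∀ i ∈ Finset.range d,
        (C (v' (e + i)) * X ^ (d - 1 - i) * q).coeff (e + d - 1 - (j : ℕ))
        = v' (e + i) * (if i ≤ (j : ℕ) ∧ (j : ℕ) ≤ i + e then q.coeff (e + i - (j : ℕ)) else 0) := by
      intro i hi
      rw [Finset.mem_range] at hi
      rw [mul_assoc, mul_comm (X ^ (d - 1 - i)) q, ← mul_assoc,
        Polynomial.coeff_mul_X_pow', Polynomial.coeff_C_mul]
      by_cases hcase : (j : ℕ) ≤ i + e
      · rw [if_pos (by omega)]
        by_cases hij : i ≤ (j : ℕ)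
        · rw [if_pos ⟨hij, hcase⟩]
          congr 2
          omega
        · rw [if_neg (by tauto), mul_zero,
            Polynomial.coeff_eq_zero_of_natDegree_lt (show q.natDegree < e + d - 1 - (j:ℕ) - (d - 1 - i) by omega),
            mul_zero]
      · rw [if_neg (by omega), if_neg (by tauto), mul_zero]
    have expand : ∀ i : Fin (e + d), v i * ProjLine.sylvester d e p q i j
        = (fun m : ℕ => if m < e then
              v' m * (if m ≤ (j : ℕ) ∧ (j : ℕ) ≤ m + d then p.coeff (d + m - (j : ℕ)) else 0)
            else v' m *
              (if m - e ≤ (j : ℕ) ∧ (j : ℕ) ≤ (m - e) + e then q.coeff (e + (m - e) - (j : ℕ)) else 0)) (i : ℕ) := by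
      intro i
      have hvv : v' (i : ℕ) = v i := by rw [hv'def]; simp [i.isLt]
      show v i * ProjLine.sylvester d e p q i j = _
      rw [ProjLine.sylvester]
      by_cases hm : (i : ℕ) < e
      · simp only [hm, if_true, Matrix.of_apply, hvv]
      · simp only [hm, if_false, Matrix.of_apply, hvv]
    calc (A * p + B * q).coeff (e + d - 1 - (j : ℕ))
        = ∑ i ∈ Finset.range e, (C (v' i) * X ^ (e - 1 - i) * p).coeff (e + d - 1 - (j : ℕ))
          + ∑ i ∈ Finset.range d, (C (v' (e + i)) * X ^ (d - 1 - i) * q).coeff (e + d - 1 - (j : ℕ)) := by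
          rw [Polynomial.coeff_add, hA, hB, Finset.sum_mul, Finset.sum_mul,
            Polynomial.finset_sum_coeff, Polynomial.finset_sum_coeff]
      _ = ∑ i ∈ Finset.range e,
            v' i * (if i ≤ (j : ℕ) ∧ (j : ℕ) ≤ i + d then p.coeff (d + i - (j : ℕ)) else 0)
          + ∑ i ∈ Finset.range d,
            v' (e + i) * (if i ≤ (j : ℕ) ∧ (j : ℕ) ≤ i + e then q.coeff (e + i - (j : ℕ)) else 0) := by
          rw [Finset.sum_congr rfl hAp, Finset.sum_congr rfl hBq]
      _ = ∑ m ∈ Finset.range (e + d), (fun m : ℕ => if m < e then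
              v' m * (if m ≤ (j : ℕ) ∧ (j : ℕ) ≤ m + d then p.coeff (d + m - (j : ℕ)) else 0)
            else v' m *
              (if m - e ≤ (j : ℕ) ∧ (j : ℕ) ≤ (m - e) + e then q.coeff (e + (m - e) - (j : ℕ)) else 0)) m := by
          rw [Finset.sum_range_add]
          congr 1
          · refine Finset.sum_congr rfl fun i hi => ?_
            rw [Finset.mem_range] at hi
            rw [if_pos hi]
          · refine Finset.sum_congr rfl fun i hi => ?_
            rw [Finset.mem_range] at hi
            rw [if_neg (show ¬ (e + i < e) by omega)]
            have h1 : e + i - e = i := by omega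
            rw [h1]
      _ = ∑ i : Fin (e + d), v i * ProjLine.sylvester d e p q i j := by
          rw [← Fin.sum_univ_eq_sum_range]
          exact (Finset.sum_congr rfl fun i _ => (expand i).symm)
      _ = 0 := hv' j
  have hzero : A * p + B * q = 0 := by
    ext k
    rw [Polynomial.coeff_zero]
    by_cases hk : k < e + d
    · have := key ⟨e + d - 1 - k, by omega⟩
      simpa [show e + d - 1 - (e + d - 1 - k) = k by omega] using this
    · apply Polynomial.coeff_eq_zero_of_natDegree_lt
      calc (A * p + B * q).natDegree
          ≤ max (A * p).natDegree (B * q).natDegree := Polynomial.natDegree_add_le _ _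
        _ ≤ e + d - 1 := by
            apply max_le
            · exact le_trans (Polynomial.natDegree_mul_le) (by omega)
            · exact le_trans (Polynomial.natDegree_mul_le) (by omega)
        _ < k := by omega
  have hpne : p ≠ 0 := fun h => by rw [h, Polynomial.natDegree_zero] at hp; omega
  have hBzero : B = 0 := by
    have hdvd : p ∣ B * q := ⟨-A, by linear_combination hzero⟩
    have hdvd' : p ∣ B := hcop.dvd_of_dvd_mul_right hdvd
    by_contra hB0
    have := Polynomial.natDegree_le_of_dvd hdvd' hB0
    omega
  have hAzero : A = 0 := by
    have h0 : A * p = 0 := by rw [hBzero, zero_mul, add_zero] at hzero; exact hzero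
    rcases mul_eq_zero.1 h0 with h | h
    · exact h
    · exact absurd h hpne
  apply hv0
  funext i
  rcases i with ⟨m, hm⟩
  show v ⟨m, hm⟩ = 0
  have hvm : v' m = v ⟨m, hm⟩ := by simp only [hv'def]; exact dif_pos hm
  rw [← hvm]
  by_cases hme : m < e
  · have hcoeff : A.coeff (e - 1 - m) = v' m := by
      rw [hA, Polynomial.finset_sum_coeff]
      have : ∀ i ∈ Finset.range e, (C (v' i) * X ^ (e - 1 - i)).coeff (e - 1 - m)
          = if i = m then v' i else 0 := by
        intro i hi
        rw [Finset.mem_range] at hi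
        rw [Polynomial.coeff_C_mul, Polynomial.coeff_X_pow]
        by_cases him : i = m
        · rw [if_pos (by omega), if_pos him, mul_one]
        · rw [if_neg (by omega), if_neg him, mul_zero]
      rw [Finset.sum_congr rfl this, Finset.sum_ite_eq' (Finset.range e) m v',
        if_pos (Finset.mem_range.2 hme)]
    rw [← hcoeff, hAzero, Polynomial.coeff_zero]
  · have hm' : m - e < d := by omega
    have hcoeff : B.coeff (d - 1 - (m - e)) = v' m := by
      rw [hB, Polynomial.finset_sum_coeff]
      have : ∀ i ∈ Finset.range d, (C (v' (e + i)) * X ^ (d - 1 - i)).coeff (d - 1 - (m - e))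
          = if i = m - e then v' (e + i) else 0 := by
        intro i hi
        rw [Finset.mem_range] at hi
        rw [Polynomial.coeff_C_mul, Polynomial.coeff_X_pow]
        by_cases him : i = m - e
        · rw [if_pos (by omega), if_pos him, mul_one]
        · rw [if_neg (by omega), if_neg him, mul_zero]
      rw [Finset.sum_congr rfl this, Finset.sum_ite_eq' (Finset.range d) (m - e) (fun i => v' (e + i)),
        if_pos (Finset.mem_range.2 hm')]
      congr 1
      omega
    rw [← hcoeff, hBzero, Polynomial.coeff_zero]

end
noncomputable section
open Polynomial

namespace GRaux

variable {F : Type*} [Field F]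

/-- The monic numerator `x(x-1)⋯(x-d+1)`. -/
def P0 (F : Type*) [Field F] (d : ℕ) : F[X] :=
  ∏ i ∈ Finset.range d, (X - C ((i : ℕ) : F))

lemma fNum_eq (d : ℕ) (a : F) : fNum F d a = C a * P0 F d := rfl

lemma fDen_eq (d : ℕ) :
    fDen F d = ∏ i ∈ Finset.range (d - 1), (X - C (-((i + 1 : ℕ) : F))) := by
  unfold fDen
  exact Finset.prod_congr rfl fun i _ => by rw [map_neg, sub_neg_eq_add]

lemma P0_monic (d : ℕ) : (P0 F d).Monic :=
  monic_prod_of_monic _ _ fun i _ => monic_X_sub_C _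

lemma fDen_monic (d : ℕ) : (fDen F d).Monic := by
  rw [fDen_eq]
  exact monic_prod_of_monic _ _ fun i _ => monic_X_sub_C _

lemma P0_natDegree (d : ℕ) : (P0 F d).natDegree = d := by
  rw [P0, Polynomial.natDegree_prod_of_monic _ _ fun i _ => monic_X_sub_C _]
  simp only [Polynomial.natDegree_X_sub_C, Finset.sum_const, Finset.card_range,
    smul_eq_mul, mul_one]

lemma fDen_natDegree (d : ℕ) : (fDen F d).natDegree = d - 1 := by
  rw [fDen_eq, Polynomial.natDegree_prod_of_monic _ _ fun i _ => monic_X_sub_C _]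
  simp only [Polynomial.natDegree_X_sub_C, Finset.sum_const, Finset.card_range,
    smul_eq_mul, mul_one]

lemma fNum_natDegree (d : ℕ) {a : F} (ha : a ≠ 0) : (fNum F d a).natDegree = d := by
  rw [fNum_eq, Polynomial.natDegree_C_mul ha, P0_natDegree]

lemma P0_eval (d : ℕ) (x : F) : (P0 F d).eval x = ∏ i ∈ Finset.range d, (x - (i : F)) := by
  rw [P0, Polynomial.eval_prod]
  exact Finset.prod_congr rfl fun i _ => by
    rw [Polynomial.eval_sub, Polynomial.eval_X, Polynomial.eval_C]

lemma fDen_eval (d : ℕ) (x : F) :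
    (fDen F d).eval x = ∏ i ∈ Finset.range (d - 1), (x + ((i + 1 : ℕ) : F)) := by
  rw [fDen, Polynomial.eval_prod]
  exact Finset.prod_congr rfl fun i _ => by
    rw [Polynomial.eval_add, Polynomial.eval_X, Polynomial.eval_C]

lemma isCoprime_X_sub_C_of_ne {a b : F} (hab : a ≠ b) : IsCoprime (X - C a) (X - C b) :=
  Polynomial.isCoprime_X_sub_C_of_isUnit_sub (isUnit_iff_ne_zero.2 (sub_ne_zero.2 hab))

lemma isCoprime_C_left {a : F} (ha : a ≠ 0) (y : F[X]) : IsCoprime (C a) y :=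
  ⟨C a⁻¹, 0, by rw [zero_mul, add_zero, ← C_mul, inv_mul_cancel₀ ha, C_1]⟩

lemma P0_coprime_fDen (d : ℕ)
    (hdis : ∀ i < d, ∀ j < d - 1, ((i : ℕ) : F) ≠ -((j + 1 : ℕ) : F)) :
    IsCoprime (P0 F d) (fDen F d) := by
  rw [P0, fDen_eq]
  refine IsCoprime.prod_left fun i hi => IsCoprime.prod_right fun j hj => ?_
  rw [Finset.mem_range] at hi hj
  exact isCoprime_X_sub_C_of_ne (hdis i hi j hj)

lemma fNum_coprime_fDen (d : ℕ) {a : F} (ha : a ≠ 0)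
    (hdis : ∀ i < d, ∀ j < d - 1, ((i : ℕ) : F) ≠ -((j + 1 : ℕ) : F)) :
    IsCoprime (fNum F d a) (fDen F d) := by
  rw [fNum_eq]
  exact IsCoprime.mul_left (isCoprime_C_left ha _) (P0_coprime_fDen d hdis)

lemma charZero_dis {F : Type*} [Field F] [CharZero F] (d : ℕ) :
    ∀ i < d, ∀ j < d - 1, ((i : ℕ) : F) ≠ -((j + 1 : ℕ) : F) := by
  intro i _ j _ h
  have h2 : ((i + (j + 1) : ℕ) : F) = 0 := by
    rw [Nat.cast_add, h]
    ring
  rw [Nat.cast_eq_zero] at h2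
  omega

section Map
variable {F' : Type*} [Field F'] (f : F →+* F')

lemma map_P0 (d : ℕ) : (P0 F d).map f = P0 F' d := by
  rw [P0, P0, Polynomial.map_prod]
  exact Finset.prod_congr rfl fun i _ => by
    rw [Polynomial.map_sub, Polynomial.map_X, Polynomial.map_C, map_natCast]

lemma map_fDen (d : ℕ) : (fDen F d).map f = fDen F' d := by
  rw [fDen, fDen, Polynomial.map_prod]
  exact Finset.prod_congr rfl fun i _ => by
    rw [Polynomial.map_add, Polynomial.map_X, Polynomial.map_C, map_natCast]

lemma map_fNum (d : ℕ) (a : F) : (fNum F d a).map f = fNum F' d (f a) := by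
  rw [fNum_eq, fNum_eq, Polynomial.map_mul, Polynomial.map_C, map_P0]

end Map

section CharZeroFacts
variable {L : Type*} [Field L] [CharZero L]

lemma fDen_eval_nat_ne_zero (d : ℕ) (m : ℕ) : (fDen L d).eval (m : L) ≠ 0 := by
  rw [fDen_eval]
  refine Finset.prod_ne_zero_iff.2 fun i _ => ?_
  have : ((m : L) + ((i + 1 : ℕ) : L)) = ((m + (i + 1) : ℕ) : L) := by push_cast; ring
  rw [this, Nat.cast_ne_zero]
  omega

lemma P0_eval_nat_zero {d : ℕ} {m : ℕ} (hm : m < d) : (P0 L d).eval (m : L) = 0 := by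
  rw [P0_eval]
  exact Finset.prod_eq_zero (Finset.mem_range.2 hm) (by rw [sub_self])

lemma fNum_eval_nat_zero {d : ℕ} (a : L) {m : ℕ} (hm : m < d) :
    (fNum L d a).eval (m : L) = 0 := by
  rw [fNum_eq, Polynomial.eval_mul, P0_eval_nat_zero hm, mul_zero]

lemma fDen_eval_neg_zero {d k : ℕ} (hk1 : 1 ≤ k) (hk : k ≤ d - 1) :
    (fDen L d).eval (-(k : L)) = 0 := by
  rw [fDen_eval]
  refine Finset.prod_eq_zero (Finset.mem_range.2 (show k - 1 < d - 1 by omega)) ?_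
  have : ((k - 1 + 1 : ℕ) : L) = (k : L) := by congr 1; omega
  rw [this, neg_add_cancel]

lemma P0_eval_neg_ne_zero (d : ℕ) {k : ℕ} (hk1 : 1 ≤ k) :
    (P0 L d).eval (-(k : L)) ≠ 0 := by
  rw [P0_eval]
  refine Finset.prod_ne_zero_iff.2 fun i _ => ?_
  intro h
  have h2 : ((k + i : ℕ) : L) = 0 := by
    rw [Nat.cast_add]
    linear_combination -h
  rw [Nat.cast_eq_zero] at h2
  omega

lemma P0_eval_d_ne_zero (d : ℕ) : (P0 L d).eval (d : L) ≠ 0 := by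
  rw [P0_eval]
  refine Finset.prod_ne_zero_iff.2 fun i hi => ?_
  rw [Finset.mem_range] at hi
  intro h
  have : ((d - i : ℕ) : L) = 0 := by
    rw [Nat.cast_sub (le_of_lt hi)]
    linear_combination h
  rw [Nat.cast_eq_zero] at this
  omega

lemma rm_C_mul {b : F} (hb : b ≠ 0) (p : F[X]) (x : F) :
    rootMultiplicity x (C b * p) = rootMultiplicity x p := by
  classical
  rw [← Polynomial.count_roots, ← Polynomial.count_roots, Polynomial.roots_C_mul _ hb]

lemma P0_roots (d : ℕ) :
    (P0 L d).roots = (Finset.range d).val.map (fun i => ((i : ℕ) : L)) := by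
  have h : P0 L d
      = (Multiset.map (fun a => X - C a)
          ((Finset.range d).val.map (fun i : ℕ => ((i : ℕ) : L)))).prod := by
    rw [Multiset.map_map, P0, Finset.prod_eq_multiset_prod]
    rfl
  rw [h]
  exact Polynomial.roots_multiset_prod_X_sub_C _

lemma rm_P0 {d m : ℕ} (hm : m < d) : rootMultiplicity ((m : ℕ) : L) (P0 L d) = 1 := by
  classical
  rw [← Polynomial.count_roots, P0_roots,
    Multiset.count_map_eq_count' _ _ Nat.cast_injective]
  exact Multiset.count_eq_one_of_mem (Finset.range d).nodup (by simpa using hm)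

lemma fDen_roots (d : ℕ) :
    (fDen L d).roots = (Finset.range (d - 1)).val.map (fun i => -((i + 1 : ℕ) : L)) := by
  have h : fDen L d
      = (Multiset.map (fun a => X - C a)
          ((Finset.range (d - 1)).val.map (fun i : ℕ => -((i + 1 : ℕ) : L)))).prod := by
    rw [Multiset.map_map, fDen_eq, Finset.prod_eq_multiset_prod]
    rfl
  rw [h]
  exact Polynomial.roots_multiset_prod_X_sub_C _

lemma rm_fDen {d k : ℕ} (hk1 : 1 ≤ k) (hk : k ≤ d - 1) :
    rootMultiplicity (-(k : L)) (fDen L d) = 1 := by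
  classical
  have hinj : Function.Injective (fun i : ℕ => -((i + 1 : ℕ) : L)) := by
    intro x y h
    simp only [neg_inj, Nat.cast_inj] at h
    omega
  have hval : (-(k : L)) = (fun i : ℕ => -((i + 1 : ℕ) : L)) (k - 1) := by
    simp only [neg_inj]
    congr 1
    omega
  rw [← Polynomial.count_roots, fDen_roots, hval,
    Multiset.count_map_eq_count' _ _ hinj]
  exact Multiset.count_eq_one_of_mem (Finset.range (d - 1)).nodup
    (by simp; omega)

end CharZeroFacts

end GRaux
end
noncomputable section
open Polynomial

namespace GRaux
variable {L : Type*} [Field L] [CharZero L]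

lemma revAt_zero' (d : ℕ) : (Polynomial.revAt d) 0 = d := by
  rw [Polynomial.revAt_le (Nat.zero_le d), Nat.sub_zero]

lemma reflect_fDen_eval0 {d : ℕ} (hd : 1 ≤ d) : ((fDen L d).reflect d).eval 0 = 0 := by
  rw [← Polynomial.coeff_zero_eq_eval_zero, Polynomial.coeff_reflect, revAt_zero']
  apply Polynomial.coeff_eq_zero_of_natDegree_lt
  rw [fDen_natDegree]
  omega

lemma eval_fNum_none {d : ℕ} (a : L) (hd : 1 ≤ d) :
    ProjLine.eval d (fNum L d a) (fDen L d) none = none := by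
  show ProjLine.evalAt _ _ 0 = none
  rw [ProjLine.evalAt, if_pos (reflect_fDen_eval0 hd)]

lemma ram_none {d : ℕ} (a : L) (hd : 1 ≤ d) :
    ProjLine.ram d (fNum L d a) (fDen L d) none = 1 := by
  show ProjLine.ramAt _ _ 0 = 1
  rw [ProjLine.ramAt, if_pos (reflect_fDen_eval0 hd)]
  set r := (fDen L d).reflect d with hr
  have hc0 : r.coeff 0 = 0 := by
    rw [hr, Polynomial.coeff_reflect, revAt_zero']
    apply Polynomial.coeff_eq_zero_of_natDegree_lt
    rw [fDen_natDegree]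
    omega
  have hc1 : r.coeff 1 = 1 := by
    rw [hr, Polynomial.coeff_reflect, Polynomial.revAt_le hd]
    have := (fDen_monic (F := L) d).coeff_natDegree
    rwa [fDen_natDegree] at this
  have hXd : X * r.divX = r := by
    have := Polynomial.X_mul_divX_add r
    rwa [hc0, Polynomial.C_0, add_zero] at this
  have hrne : r ≠ 0 := fun h => by
    rw [h, Polynomial.coeff_zero] at hc1
    exact zero_ne_one hc1
  have hdiv : r.divX.eval 0 = 1 := by
    rw [← Polynomial.coeff_zero_eq_eval_zero, Polynomial.coeff_divX, hc1]
  calc rootMultiplicity 0 r = rootMultiplicity 0 (X * r.divX) := by rw [hXd]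
    _ = rootMultiplicity 0 (X : L[X]) + rootMultiplicity 0 r.divX :=
        Polynomial.rootMultiplicity_mul (by rw [hXd]; exact hrne)
    _ = 1 + 0 := by
        congr 1
        · rw [show (X : L[X]) = X - C 0 by rw [Polynomial.C_0, sub_zero]]
          exact Polynomial.rootMultiplicity_X_sub_C_self
        · exact Polynomial.rootMultiplicity_eq_zero (by
            intro h
            rw [Polynomial.IsRoot, hdiv] at h
            exact one_ne_zero h)
    _ = 1 := rfl

lemma eval_some_nat {d : ℕ} (a : L) {m : ℕ} (hm : m < d) :
    ProjLine.eval d (fNum L d a) (fDen L d) (some (m : L)) = some 0 := by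
  show ProjLine.evalAt _ _ _ = _
  rw [ProjLine.evalAt, if_neg (fDen_eval_nat_ne_zero d m), fNum_eval_nat_zero a hm, zero_div]

lemma eval_some_neg {d : ℕ} (a : L) {k : ℕ} (hk1 : 1 ≤ k) (hk : k ≤ d - 1) :
    ProjLine.eval d (fNum L d a) (fDen L d) (some (-(k : L))) = none := by
  show ProjLine.evalAt _ _ _ = _
  rw [ProjLine.evalAt, if_pos (fDen_eval_neg_zero hk1 hk)]

lemma ram_some_nat {d : ℕ} {a : L} (ha : a ≠ 0) {m : ℕ} (hm : m < d) :
    ProjLine.ram d (fNum L d a) (fDen L d) (some (m : L)) = 1 := by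
  show ProjLine.ramAt _ _ _ = 1
  rw [ProjLine.ramAt, if_neg (fDen_eval_nat_ne_zero d m), fNum_eval_nat_zero a hm,
    map_zero, zero_mul, sub_zero]
  rw [show C ((fDen L d).eval (m : L)) * fNum L d a
      = C ((fDen L d).eval (m : L) * a) * P0 L d by
    rw [fNum_eq, Polynomial.C_mul, mul_assoc]]
  rw [rm_C_mul (mul_ne_zero (fDen_eval_nat_ne_zero d m) ha), rm_P0 hm]

lemma ram_some_neg {d : ℕ} (a : L) {k : ℕ} (hk1 : 1 ≤ k) (hk : k ≤ d - 1) :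
    ProjLine.ram d (fNum L d a) (fDen L d) (some (-(k : L))) = 1 := by
  show ProjLine.ramAt _ _ _ = 1
  rw [ProjLine.ramAt, if_pos (fDen_eval_neg_zero hk1 hk)]
  exact rm_fDen hk1 hk

/-- a determines the map. -/
lemma eq_of_eval_eq_at_d {d : ℕ} {a b : L}
    (h : ProjLine.eval d (fNum L d a) (fDen L d) (some (d : L))
       = ProjLine.eval d (fNum L d b) (fDen L d) (some (d : L))) : a = b := by
  have hq := fDen_eval_nat_ne_zero (L := L) d d
  have hp := P0_eval_d_ne_zero (L := L) d
  rw [show ProjLine.eval d (fNum L d a) (fDen L d) (some (d : L))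
      = ProjLine.evalAt (fNum L d a) (fDen L d) (d : L) from rfl,
    show ProjLine.eval d (fNum L d b) (fDen L d) (some (d : L))
      = ProjLine.evalAt (fNum L d b) (fDen L d) (d : L) from rfl,
    ProjLine.evalAt, ProjLine.evalAt, if_neg hq, if_neg hq] at h
  rw [Option.some.injEq] at h
  rw [div_eq_div_iff hq hq] at h
  have h2 : (fNum L d a).eval (d : L) = (fNum L d b).eval (d : L) :=
    mul_right_cancel₀ hq h
  rw [fNum_eq, fNum_eq, Polynomial.eval_mul, Polynomial.eval_mul,
    Polynomial.eval_C, Polynomial.eval_C] at h2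
  exact mul_right_cancel₀ hp h2

end GRaux
end
noncomputable section
open Polynomial

namespace GRaux
variable {L : Type*} [Field L] [CharZero L]

/-- Finset version of `stdSet`. -/
def stdFinset (L : Type*) [Field L] (d : ℕ) : Finset (ProjLine L) :=
  insert none ((Finset.Icc (-(d : ℤ) + 1) ((d : ℤ) - 1)).image
    (fun m : ℤ => (some ((m : ℤ) : L) : ProjLine L)))

omit [CharZero L] in
lemma stdSet_eq_coe (d : ℕ) : stdSet L d = ↑(stdFinset L d) := by
  rw [stdSet, stdFinset, Finset.coe_insert, Finset.coe_image, Finset.coe_Icc]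

omit [CharZero L] in
lemma none_mem_stdSet (d : ℕ) : (none : ProjLine L) ∈ stdSet L d := Set.mem_insert _ _

omit [CharZero L] in
lemma int_mem_stdSet {d : ℕ} {m : ℤ} (h1 : -(d : ℤ) + 1 ≤ m) (h2 : m ≤ (d : ℤ) - 1) :
    (some ((m : ℤ) : L) : ProjLine L) ∈ stdSet L d :=
  Set.mem_insert_of_mem _ ⟨m, ⟨h1, h2⟩, rfl⟩

lemma cast_nonneg_eq {m : ℤ} (hm : 0 ≤ m) : ((m : ℤ) : L) = ((m.toNat : ℕ) : L) := by
  rw [← Int.cast_natCast (R := L), Int.toNat_of_nonneg hm]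

lemma cast_neg_eq {m : ℤ} (hm : m < 0) : ((m : ℤ) : L) = -(((-m).toNat : ℕ) : L) := by
  rw [← Int.cast_natCast (R := L), Int.toNat_of_nonneg (by omega), Int.cast_neg, neg_neg]

lemma eval_mem_stdSet {d : ℕ} (a : L) (hd : 2 ≤ d) {P : ProjLine L} (hP : P ∈ stdSet L d) :
    ProjLine.eval d (fNum L d a) (fDen L d) P ∈ stdSet L d := by
  rcases Set.mem_insert_iff.1 hP with rfl | ⟨m, hm, rfl⟩
  · rw [eval_fNum_none a (by omega)]
    exact none_mem_stdSet d
  · show ProjLine.eval d (fNum L d a) (fDen L d) (some ((m : ℤ) : L)) ∈ stdSet L d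
    obtain ⟨hm1, hm2⟩ := hm
    rcases le_or_gt 0 m with hmo | hmo
    · rw [cast_nonneg_eq hmo, eval_some_nat a (show m.toNat < d by omega)]
      have h0 : (some (0 : L) : ProjLine L) = some ((0 : ℤ) : L) := by rw [Int.cast_zero]
      rw [h0]
      exact int_mem_stdSet (by omega) (by omega)
    · rw [cast_neg_eq hmo, eval_some_neg a (show 1 ≤ (-m).toNat by omega)
        (show (-m).toNat ≤ d - 1 by omega)]
      exact none_mem_stdSet d

lemma ram_int {d : ℕ} {a : L} (ha : a ≠ 0) (hd : 2 ≤ d) {m : ℤ}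
    (hm1 : -(d : ℤ) + 1 ≤ m) (hm2 : m ≤ (d : ℤ) - 1) :
    ProjLine.ram d (fNum L d a) (fDen L d) (some ((m : ℤ) : L)) = 1 := by
  rcases le_or_gt 0 m with hmo | hmo
  · rw [cast_nonneg_eq hmo]
    exact ram_some_nat ha (show m.toNat < d by omega)
  · rw [cast_neg_eq hmo]
    exact ram_some_neg a (show 1 ≤ (-m).toNat by omega) (show (-m).toNat ≤ d - 1 by omega)

lemma sum_ram {d : ℕ} {a : L} (ha : a ≠ 0) (hd : 2 ≤ d) :
    (∑ᶠ P ∈ stdSet L d, ProjLine.ram d (fNum L d a) (fDen L d) P) = 2 * d := by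
  classical
  rw [stdSet_eq_coe, finsum_mem_coe_finset, stdFinset]
  have hnone : (none : ProjLine L) ∉ (Finset.Icc (-(d : ℤ) + 1) ((d : ℤ) - 1)).image
      (fun m : ℤ => (some ((m : ℤ) : L) : ProjLine L)) := by
    simp
  rw [Finset.sum_insert hnone, ram_none a (by omega : 1 ≤ d)]
  have hinj : ∀ x ∈ Finset.Icc (-(d : ℤ) + 1) ((d : ℤ) - 1),
      ∀ y ∈ Finset.Icc (-(d : ℤ) + 1) ((d : ℤ) - 1),
      (some ((x : ℤ) : L) : ProjLine L) = some ((y : ℤ) : L) → x = y := by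
    intro x _ y _ h
    rw [Option.some.injEq] at h
    exact_mod_cast h
  rw [Finset.sum_image hinj]
  have hone : ∀ m ∈ Finset.Icc (-(d : ℤ) + 1) ((d : ℤ) - 1),
      ProjLine.ram d (fNum L d a) (fDen L d) (some ((m : ℤ) : L)) = 1 := by
    intro m hm
    rw [Finset.mem_Icc] at hm
    exact ram_int ha hd hm.1 hm.2
  rw [Finset.sum_congr rfl hone, Finset.sum_const, smul_eq_mul, mul_one, Int.card_Icc,
    show ((d : ℤ) - 1 + 1 - (-(d : ℤ) + 1)).toNat = 2 * d - 1 by omega]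
  omega

end GRaux
end
noncomputable section
open Polynomial

namespace GRaux

/-- Integer models. -/
def PZ (d : ℕ) : ℤ[X] := ∏ i ∈ Finset.range d, (X - C ((i : ℕ) : ℤ))

def QZ (d : ℕ) : ℤ[X] := ∏ i ∈ Finset.range (d - 1), (X + C ((i + 1 : ℕ) : ℤ))

variable {F : Type*} [Field F]

lemma map_PZ (d : ℕ) : (PZ d).map (Int.castRingHom F) = P0 F d := by
  rw [PZ, P0, Polynomial.map_prod]
  exact Finset.prod_congr rfl fun i _ => by
    rw [Polynomial.map_sub, Polynomial.map_X, Polynomial.map_C]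
    norm_num

lemma map_QZ (d : ℕ) : (QZ d).map (Int.castRingHom F) = fDen F d := by
  rw [QZ, fDen, Polynomial.map_prod]
  exact Finset.prod_congr rfl fun i _ => by
    rw [Polynomial.map_add, Polynomial.map_X, Polynomial.map_C]
    norm_num

/-- Integer Sylvester matrix (same formula as `ProjLine.sylvester`). -/
def sylZ (d e : ℕ) (p q : ℤ[X]) : Matrix (Fin (e + d)) (Fin (e + d)) ℤ :=
  Matrix.of fun i j =>
    if (i : ℕ) < e then
      (if (i : ℕ) ≤ (j : ℕ) ∧ (j : ℕ) ≤ (i : ℕ) + d then p.coeff (d + (i : ℕ) - (j : ℕ)) else 0)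
    else
      (if (i : ℕ) - e ≤ (j : ℕ) ∧ (j : ℕ) ≤ ((i : ℕ) - e) + e then
        q.coeff (e + ((i : ℕ) - e) - (j : ℕ)) else 0)

lemma sylZ_map (d e : ℕ) (p q : ℤ[X]) :
    (sylZ d e p q).map (Int.castRingHom F)
      = ProjLine.sylvester d e (p.map (Int.castRingHom F)) (q.map (Int.castRingHom F)) := by
  ext i j
  simp only [Matrix.map_apply, sylZ, ProjLine.sylvester, Matrix.of_apply]
  split_ifs <;> simp [Polynomial.coeff_map]

/-- The integer resultant. -/
def rZ (d : ℕ) : ℤ := (sylZ d d (PZ d) (QZ d)).det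

lemma det_sylvester_eq_cast (d : ℕ) :
    (ProjLine.sylvester d d (P0 F d) (fDen F d)).det = ((rZ d : ℤ) : F) := by
  have h := RingHom.map_det (Int.castRingHom F) (sylZ d d (PZ d) (QZ d))
  rw [RingHom.mapMatrix_apply, sylZ_map, map_PZ, map_QZ] at h
  rw [rZ, ← h]
  rfl

lemma rZ_ne_zero {d : ℕ} (hd : 2 ≤ d) : rZ d ≠ 0 := by
  intro h
  have hc : IsCoprime (P0 ℚ d) (fDen ℚ d) := P0_coprime_fDen d (charZero_dis d)
  have h2 := sylvester_det_ne_zero (e := d) hc (P0_natDegree d)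
    (by rw [fDen_natDegree]; omega) (by omega) (by omega)
  apply h2
  rw [det_sylvester_eq_cast, h, Int.cast_zero]

lemma rZ_prime_factors {d : ℕ} (hd : 2 ≤ d) {l : ℕ} (hl : l.Prime)
    (hdvd : (l : ℤ) ∣ rZ d) : l ∣ (2 * d - 2).factorial := by
  by_contra hnd
  have hlarge : 2 * d - 2 < l := by
    by_contra hle
    exact hnd (Nat.dvd_factorial hl.pos (by omega))
  haveI : Fact l.Prime := ⟨hl⟩
  have hdis : ∀ i < d, ∀ j < d - 1, ((i : ℕ) : ZMod l) ≠ -((j + 1 : ℕ) : ZMod l) := by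
    intro i hi j hj h
    have h2 : ((i + (j + 1) : ℕ) : ZMod l) = 0 := by
      rw [Nat.cast_add, h]
      ring
    rw [ZMod.natCast_eq_zero_iff] at h2
    have := Nat.le_of_dvd (by omega) h2
    omega
  have hc : IsCoprime (P0 (ZMod l) d) (fDen (ZMod l) d) := P0_coprime_fDen d hdis
  have hne := sylvester_det_ne_zero (e := d) hc (P0_natDegree d)
    (by rw [fDen_natDegree]; omega) (by omega) (by omega)
  apply hne
  rw [det_sylvester_eq_cast]
  rw [ZMod.intCast_zmod_eq_zero_iff_dvd]
  exact hdvd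

section Valuation
open IsDedekindDomain NumberField

variable {K : Type*} [Field K] [NumberField K]

lemma val_int_le_one (v : NFPlace K) (m : ℤ) : v.valuation K ((m : ℤ) : K) ≤ 1 := by
  have h : ((m : ℤ) : K) = algebraMap (𝓞 K) K ((m : ℤ) : 𝓞 K) := (map_intCast _ m).symm
  rw [h]
  exact v.valuation_le_one _

lemma val_nat_le_one (v : NFPlace K) (m : ℕ) : v.valuation K ((m : ℕ) : K) ≤ 1 := by
  have h : ((m : ℕ) : K) = ((m : ℤ) : K) := by push_cast; rfl
  rw [h]
  exact val_int_le_one v m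

lemma val_dvd_eq_one (v : NFPlace K) {N : ℕ} (hN : v.valuation K ((N : ℕ) : K) = 1)
    {m : ℤ} (hm : m ≠ 0) (hdvd : m ∣ (N : ℤ)) : v.valuation K ((m : ℤ) : K) = 1 := by
  obtain ⟨c, hc⟩ := hdvd
  have hcast : ((N : ℕ) : K) = ((m : ℤ) : K) * ((c : ℤ) : K) := by
    rw [← Int.cast_mul, ← hc]
    push_cast
    rfl
  refine le_antisymm (val_int_le_one v m) ?_
  calc (1 : WithZero (Multiplicative ℤ))
      = v.valuation K ((m : ℤ) : K) * v.valuation K ((c : ℤ) : K) := by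
        rw [← Valuation.map_mul, ← hcast, hN]
    _ ≤ v.valuation K ((m : ℤ) : K) * 1 := mul_le_mul_right (val_int_le_one v c) _
    _ = v.valuation K ((m : ℤ) : K) := mul_one _

lemma val_eq_one_of_prime_factors (v : NFPlace K) {N : ℕ}
    (hN : v.valuation K ((N : ℕ) : K) = 1) :
    ∀ n : ℕ, 0 < n → (∀ p : ℕ, p.Prime → p ∣ n → p ∣ N) →
      v.valuation K ((n : ℕ) : K) = 1 := by
  intro n
  induction n using Nat.strong_induction_on with
  | _ n ih =>
    intro hn hp
    rcases eq_or_ne n 1 with rfl | hn1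
    · rw [Nat.cast_one, Valuation.map_one]
    · set p := n.minFac with hpdef
      have hpp : p.Prime := Nat.minFac_prime hn1
      have hpdvd : p ∣ n := Nat.minFac_dvd n
      obtain ⟨m, hm⟩ := hpdvd
      have hm0 : 0 < m := by
        rcases Nat.eq_zero_or_pos m with h | h
        · rw [h, mul_zero] at hm; omega
        · exact h
      have hmlt : m < n := by
        have := hpp.two_le
        calc m < 2 * m := by omega
          _ ≤ p * m := by
              apply Nat.mul_le_mul_right
              omega
          _ = n := hm.symm
      have hcast : ((n : ℕ) : K) = ((p : ℕ) : K) * ((m : ℕ) : K) := by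
        rw [hm]
        push_cast
        ring
      rw [hcast, Valuation.map_mul]
      have hvp : v.valuation K ((p : ℕ) : K) = 1 := by
        have h1 : ((p : ℕ) : K) = ((p : ℤ) : K) := by push_cast; rfl
        rw [h1]
        refine val_dvd_eq_one v hN (by exact_mod_cast hpp.ne_zero) ?_
        exact_mod_cast Int.natCast_dvd_natCast.2 (hp p hpp ⟨m, hm⟩)
      have hvm : v.valuation K ((m : ℕ) : K) = 1 :=
        ih m hmlt hm0 fun r hr hrm => hp r hr (hrm.trans ⟨p, by rw [hm]; ring⟩)
      rw [hvp, hvm, mul_one]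

lemma val_rZ_eq_one {d : ℕ} (hd : 2 ≤ d) (v : NFPlace K)
    (hfac : v.valuation K (((2 * d - 2).factorial : ℕ) : K) = 1) :
    v.valuation K ((rZ d : ℤ) : K) = 1 := by
  have hn0 : 0 < (rZ d).natAbs := Int.natAbs_pos.2 (rZ_ne_zero hd)
  have hval : v.valuation K (((rZ d).natAbs : ℕ) : K) = 1 := by
    refine val_eq_one_of_prime_factors v hfac _ hn0 fun p hp hpd => ?_
    exact rZ_prime_factors hd hp (Int.natCast_dvd.2 hpd)
  rcases Int.natAbs_eq (rZ d) with h | h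
  · rw [h, Int.cast_natCast]
    exact hval
  · rw [h, Int.cast_neg, Valuation.map_neg, Int.cast_natCast]
    exact hval

end Valuation

end GRaux
end
noncomputable section
open Polynomial

namespace GRaux

variable {F : Type*} [Field F]

lemma resultant_fNum_fDen (d : ℕ) (a : F) :
    ProjLine.resultant d d (fNum F d a) (fDen F d) = a ^ d * ((rZ d : ℤ) : F) := by
  rw [ProjLine.resultant]
  have h1 : ProjLine.sylvester d d (fNum F d a) (fDen F d)
      = Matrix.of (fun (i j : Fin (d + d)) => (if (i : ℕ) < d then a else 1)
          * ProjLine.sylvester d d (P0 F d) (fDen F d) i j) := by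
    ext i j
    simp only [ProjLine.sylvester, Matrix.of_apply]
    by_cases hi : (i : ℕ) < d
    · rw [if_pos hi, if_pos hi, if_pos hi]
      split_ifs with hg
      · rw [fNum_eq, Polynomial.coeff_C_mul]
      · rw [mul_zero]
    · rw [if_neg hi, if_neg hi, if_neg hi, one_mul]
  rw [h1, Matrix.det_mul_column, det_sylvester_eq_cast]
  congr 1
  rw [Fin.prod_univ_eq_prod_range (fun n => if n < d then a else 1) (d + d),
    Finset.prod_range_add]
  have e1 : ∏ x ∈ Finset.range d, (if x < d then a else 1) = a ^ d := by
    rw [Finset.prod_congr rfl fun x hx => if_pos (Finset.mem_range.1 hx),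
      Finset.prod_const, Finset.card_range]
  have e2 : ∏ x ∈ Finset.range d, (if d + x < d then a else 1) = 1 := by
    rw [Finset.prod_congr rfl fun x _ => if_neg (by omega), Finset.prod_const, one_pow]
  rw [e1, e2, mul_one]

lemma fNum_coeff (d n : ℕ) (a : F) :
    (fNum F d a).coeff n = a * (((PZ d).coeff n : ℤ) : F) := by
  rw [fNum_eq, Polynomial.coeff_C_mul, ← map_PZ (F := F), Polynomial.coeff_map]
  rfl

lemma fDen_coeff (d n : ℕ) :
    (fDen F d).coeff n = (((QZ d).coeff n : ℤ) : F) := by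
  rw [← map_QZ (F := F), Polynomial.coeff_map]
  rfl

section Main
open IsDedekindDomain NumberField

variable {K : Type*} [Field K] [NumberField K]

lemma fact_val {d : ℕ} {S : Set (NFPlace K)}
    (hS : S = {v : NFPlace K | v.valuation K ((Nat.factorial (2 * d - 2) : K)) ≠ 1})
    {v : NFPlace K} (hv : v ∉ S) :
    v.valuation K (((2 * d - 2).factorial : ℕ) : K) = 1 := by
  rw [hS] at hv
  simpa using hv

lemma resultant_sunit {d : ℕ} (hd : 2 ≤ d) {S : Set (NFPlace K)}
    (hS : S = {v : NFPlace K | v.valuation K ((Nat.factorial (2 * d - 2) : K)) ≠ 1})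
    {a : K} (ha : SUnit S a) :
    SUnit S (ProjLine.resultant d d (fNum K d a) (fDen K d)) := by
  rw [resultant_fNum_fDen]
  constructor
  · exact mul_ne_zero (pow_ne_zero _ ha.1) (Int.cast_ne_zero.2 (rZ_ne_zero hd))
  · intro v hv
    rw [Valuation.map_mul, Valuation.map_pow, ha.2 v hv, one_pow, one_mul]
    exact val_rZ_eq_one hd v (fact_val hS hv)

lemma sInteger_fNum_coeff {d : ℕ} {S : Set (NFPlace K)} {a : K} (ha : SUnit S a) (n : ℕ) :
    SInteger S ((fNum K d a).coeff n) := by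
  intro v hv
  rw [fNum_coeff, Valuation.map_mul, ha.2 v hv, one_mul]
  exact val_int_le_one v _

lemma sInteger_fDen_coeff {d : ℕ} (S : Set (NFPlace K)) (n : ℕ) :
    SInteger S ((fDen K d).coeff n) := by
  intro v hv
  rw [fDen_coeff]
  exact val_int_le_one v _

lemma isRatMapOfDeg_f {d : ℕ} {a : K} (ha : a ≠ 0) :
    IsRatMapOfDeg d (fNum K d a) (fDen K d) :=
  ⟨fNum_coprime_fDen d ha (charZero_dis d),
   le_of_eq (fNum_natDegree d ha),
   by rw [fDen_natDegree]; omega,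
   Or.inl (fNum_natDegree d ha)⟩

lemma simpleGoodRed_f {d : ℕ} (hd : 2 ≤ d) {S : Set (NFPlace K)}
    (hS : S = {v : NFPlace K | v.valuation K ((Nat.factorial (2 * d - 2) : K)) ≠ 1})
    {a : K} (ha : SUnit S a) :
    SimpleGoodRed S d (fNum K d a) (fDen K d) := by
  refine ⟨1, fNum K d a, fDen K d, ?_, isRatMapOfDeg_f ha.1, sInteger_fNum_coeff ha,
    sInteger_fDen_coeff S, resultant_sunit hd hS ha, ?_⟩
  · rw [Matrix.det_one]
    exact one_ne_zero
  · intro P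
    rw [ProjLine.mobius_one, ProjLine.mobius_one]

end Main
end GRaux
end
noncomputable section
open Polynomial IsDedekindDomain NumberField

namespace GRaux

variable {K : Type*} [Field K] [NumberField K]

local notation "Kbar" => AlgebraicClosure K

lemma polyBar_fNum (d : ℕ) (a : K) :
    polyBar (fNum K d a) = fNum Kbar d (algebraMap K Kbar a) :=
  map_fNum (algebraMap K Kbar) d a

lemma polyBar_fDen (d : ℕ) :
    polyBar (fDen K d) = fDen Kbar d :=
  map_fDen (algebraMap K Kbar) d

lemma goodRedPoints_stdSet {d : ℕ} (hd : 2 ≤ d) {S : Set (NFPlace K)}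
    (hS : S = {v : NFPlace K | v.valuation K ((Nat.factorial (2 * d - 2) : K)) ≠ 1}) :
    GoodRedPoints S (stdSet Kbar d) := by
  intro v hv O hO
  have hfac := fact_val hS hv
  -- all integer points are in O
  have hmem : ∀ m : ℤ, ((m : ℤ) : Kbar) ∈ O := by
    intro m
    have hc : ((m : ℤ) : Kbar) = algebraMap K Kbar ((m : ℤ) : K) := (map_intCast _ m).symm
    rw [hc]
    exact (hO ((m : ℤ) : K)).2 (val_int_le_one v m)
  have hred : ∀ m : ℤ, ProjLine.red O (some ((m : ℤ) : Kbar))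
      = some (IsLocalRing.residue ↥O ⟨((m : ℤ) : Kbar), hmem m⟩) := by
    intro m
    show (if h : ((m : ℤ) : Kbar) ∈ O then _ else none) = _
    rw [dif_pos (hmem m)]
  intro P hP Q hQ hPQ
  rcases Set.mem_insert_iff.1 hP with rfl | ⟨m, hm, rfl⟩ <;>
    rcases Set.mem_insert_iff.1 hQ with rfl | ⟨m', hm', rfl⟩
  · rfl
  · rw [show ProjLine.red O none = none from rfl, hred m'] at hPQ
    exact absurd hPQ (by simp)
  · rw [show ProjLine.red O none = none from rfl, hred m] at hPQ
    exact absurd hPQ (by simp)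
  · -- two integer points
    rcases eq_or_ne m m' with rfl | hne
    · rfl
    exfalso
    rw [hred m, hred m', Option.some.injEq] at hPQ
    -- the difference is a unit of O
    set u : K := ((m - m' : ℤ) : K) with hu
    have hu0 : u ≠ 0 := Int.cast_ne_zero.2 (sub_ne_zero.2 hne)
    have hudvd : (m - m') ∣ ((2 * d - 2).factorial : ℤ) := by
      rw [← Int.natAbs_dvd]
      rw [Set.mem_Icc] at hm hm'
      exact Int.natCast_dvd_natCast.2
        (Nat.dvd_factorial (by omega) (by omega))
    have hval : v.valuation K u = 1 := val_dvd_eq_one v hfac (sub_ne_zero.2 hne) hudvd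
    have hvalinv : v.valuation K u⁻¹ = 1 := by
      have h1 := (v.valuation K).map_mul u u⁻¹
      rw [mul_inv_cancel₀ hu0, Valuation.map_one, hval, one_mul] at h1
      exact h1.symm
    have hdiff : ((m : ℤ) : Kbar) - ((m' : ℤ) : Kbar) = algebraMap K Kbar u := by
      rw [map_intCast]
      push_cast
      ring
    have hmemu : algebraMap K Kbar u ∈ O := (hO u).2 (le_of_eq hval)
    have hmeminv : (algebraMap K Kbar u)⁻¹ ∈ O := by
      rw [← map_inv₀]
      exact (hO u⁻¹).2 (le_of_eq hvalinv)
    have huKbar0 : algebraMap K Kbar u ≠ 0 := fun h => hu0 ((algebraMap K Kbar).injective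
      (by rw [h, map_zero]))
    have hunit : IsUnit ((⟨((m : ℤ) : Kbar), hmem m⟩ : O) - ⟨((m' : ℤ) : Kbar), hmem m'⟩) := by
      refine isUnit_iff_exists_inv.2 ⟨⟨(algebraMap K Kbar u)⁻¹, hmeminv⟩, ?_⟩
      apply Subtype.ext
      push_cast
      rw [hdiff, mul_inv_cancel₀ huKbar0]
    have hker := Ideal.Quotient.eq.1 hPQ
    rw [IsLocalRing.mem_maximalIdeal, mem_nonunits_iff] at hker
    exact hker hunit

lemma memGR_f {d : ℕ} (hd : 2 ≤ d) {S : Set (NFPlace K)}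
    (hS : S = {v : NFPlace K | v.valuation K ((Nat.factorial (2 * d - 2) : K)) ≠ 1})
    {a : K} (ha : SUnit S a) :
    MemGR S d (2 * d)
      ⟨fNum K d a, fDen K d, stdSet Kbar d, stdSet Kbar d⟩ := by
  have habar : algebraMap K Kbar a ≠ 0 := fun h => ha.1 ((algebraMap K Kbar).injective
    (by rw [h, map_zero]))
  refine ⟨⟨isRatMapOfDeg_f ha.1, ?_, ?_, ?_, ?_, goodRedPoints_stdSet hd hS⟩,
    simpleGoodRed_f hd hS ha⟩
  · rw [stdSet_eq_coe]
    exact (stdFinset Kbar d).finite_toSet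
  · show stdSet Kbar d = stdSet Kbar d ∪ _
    refine (Set.union_eq_left.2 ?_).symm
    rintro _ ⟨P, hP, rfl⟩
    show ProjLine.eval d (polyBar (fNum K d a)) (polyBar (fDen K d)) P ∈ _
    rw [polyBar_fNum, polyBar_fDen]
    exact eval_mem_stdSet _ hd hP
  · intro σ P hP
    rcases Set.mem_insert_iff.1 hP with rfl | ⟨m, hm, rfl⟩
    · show Option.map _ none ∈ _
      rw [Option.map_none]
      exact none_mem_stdSet d
    · show Option.map _ (some ((m : ℤ) : Kbar)) ∈ _
      rw [Option.map_some, map_intCast]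
      exact int_mem_stdSet hm.1 hm.2
  · show (∑ᶠ P ∈ stdSet Kbar d, ProjLine.ram d (polyBar (fNum K d a)) (polyBar (fDen K d)) P) = 2 * d
    rw [polyBar_fNum, polyBar_fDen]
    exact sum_ram habar hd

end GRaux
end
noncomputable section
open Polynomial IsDedekindDomain NumberField

namespace GRaux

variable {K : Type*} [Field K] [NumberField K]

local notation "Kbar" => AlgebraicClosure K

lemma sUnit_two {d : ℕ} (hd : 2 ≤ d) {S : Set (NFPlace K)}
    (hS : S = {v : NFPlace K | v.valuation K ((Nat.factorial (2 * d - 2) : K)) ≠ 1}) :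
    SUnit S (2 : K) := by
  refine ⟨two_ne_zero, fun v hv => ?_⟩
  have hfac := fact_val hS hv
  have h2 : ((2 : ℤ) : K) = (2 : K) := by norm_num
  have hdvd : (2 : ℤ) ∣ ((2 * d - 2).factorial : ℤ) := by
    have : ((2 : ℕ) : ℤ) ∣ (((2 * d - 2).factorial : ℕ) : ℤ) :=
      Int.natCast_dvd_natCast.2 (Nat.dvd_factorial (by omega) (by omega))
    simpa using this
  have := val_dvd_eq_one v hfac (by norm_num : (2 : ℤ) ≠ 0) hdvd
  rwa [h2] at this

lemma sUnit_pow {S : Set (NFPlace K)} {a : K} (ha : SUnit S a) (n : ℕ) :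
    SUnit S (a ^ n) := by
  refine ⟨pow_ne_zero n ha.1, fun v hv => ?_⟩
  rw [Valuation.map_pow, ha.2 v hv, one_pow]

lemma matBar_det_ne_zero {M : Matrix (Fin 2) (Fin 2) K} (h : M.det ≠ 0) :
    (matBar M).det ≠ 0 := by
  have hdet : (algebraMap K Kbar) M.det = (matBar M).det := by
    rw [RingHom.map_det]
    rfl
  rw [← hdet]
  intro h0
  exact h ((algebraMap K Kbar).injective (by rw [h0, map_zero]))

theorem part2 {d : ℕ} (hd : 2 ≤ d) {S : Set (NFPlace K)}
    (hS : S = {v : NFPlace K | v.valuation K ((Nat.factorial (2 * d - 2) : K)) ≠ 1}) :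
    ¬ ∃ T : Set (DynTriple K), T.Finite ∧
        ∀ a : K, SUnit S a →
          ∃ t' ∈ T, TripleEquiv S d
            ⟨fNum K d a, fDen K d, stdSet Kbar d, stdSet Kbar d⟩ t' := by
  classical
  rintro ⟨T, hTfin, hcov⟩
  -- the S-units 2^(n+1)
  set a : ℕ → K := fun n => (2 : K) ^ (n + 1) with ha_def
  have hainj : Function.Injective a := by
    intro n m h
    have h2 : ((2 : ℕ) : K) ^ (n + 1) = ((2 : ℕ) : K) ^ (m + 1) := by
      rw [Nat.cast_ofNat]
      exact h
    have h3 : ((2 ^ (n + 1) : ℕ) : K) = ((2 ^ (m + 1) : ℕ) : K) := by push_cast; exact h2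
    have h4 := Nat.cast_injective (R := K) h3
    have := Nat.pow_right_injective (le_refl 2) h4
    omega
  have hsu : ∀ n, SUnit S (a n) := fun n => sUnit_pow (sUnit_two hd hS) (n + 1)
  -- choose equivalences
  have hsel : ∀ n : ℕ, ∃ t' ∈ T, TripleEquiv S d
      ⟨fNum K d (a n), fDen K d, stdSet Kbar d, stdSet Kbar d⟩ t' :=
    fun n => hcov (a n) (hsu n)
  choose t' ht'T hequiv using hsel
  choose M hM using hequiv
  -- notation
  have hMdet : ∀ n, (matBar (M n)).det ≠ 0 := fun n => matBar_det_ne_zero (hM n).2.1.1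
  have hcomm : ∀ n P, ProjLine.mobius (matBar (M n))
      (ProjLine.eval d (polyBar (t' n).p) (polyBar (t' n).q) P)
      = ProjLine.eval d (polyBar (fNum K d (a n))) (polyBar (fDen K d))
          (ProjLine.mobius (matBar (M n)) P) := fun n => (hM n).2.2.1
  have hMY : ∀ n, ProjLine.mobius (matBar (M n)) '' (t' n).Y = stdSet Kbar d :=
    fun n => (hM n).2.2.2.1
  -- picking three distinct points of Y
  set Cond : DynTriple K → (ProjLine Kbar × ProjLine Kbar × ProjLine Kbar) → Prop :=
    fun s p => p.1 ∈ s.Y ∧ p.2.1 ∈ s.Y ∧ p.2.2 ∈ s.Y ∧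
      p.1 ≠ p.2.1 ∧ p.1 ≠ p.2.2 ∧ p.2.1 ≠ p.2.2 with hCond
  set pick : DynTriple K → ProjLine Kbar × ProjLine Kbar × ProjLine Kbar := fun s =>
    if h : ∃ p, Cond s p then h.choose else (none, none, none) with hpick
  have hpick_spec : ∀ s, (∃ p, Cond s p) → Cond s (pick s) := by
    intro s h
    rw [hpick]
    simp only [dif_pos h]
    exact h.choose_spec
  -- each (t' n).Y has three distinct points
  have hex : ∀ n, ∃ p, Cond (t' n) p := by
    intro n
    have h0 : (none : ProjLine Kbar) ∈ stdSet Kbar d := none_mem_stdSet d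
    have h1 : (some ((0 : ℤ) : Kbar) : ProjLine Kbar) ∈ stdSet Kbar d :=
      int_mem_stdSet (by omega) (by omega)
    have h2 : (some ((1 : ℤ) : Kbar) : ProjLine Kbar) ∈ stdSet Kbar d :=
      int_mem_stdSet (by omega) (by omega)
    rw [← hMY n] at h0 h1 h2
    obtain ⟨y1, hy1, hy1e⟩ := h0
    obtain ⟨y2, hy2, hy2e⟩ := h1
    obtain ⟨y3, hy3, hy3e⟩ := h2
    have d12 : y1 ≠ y2 := fun h => by
      rw [h, hy2e] at hy1e; exact Option.some_ne_none _ hy1e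
    have d13 : y1 ≠ y3 := fun h => by
      rw [h, hy3e] at hy1e; exact Option.some_ne_none _ hy1e
    have d23 : y2 ≠ y3 := fun h => by
      rw [h, hy3e] at hy2e
      rw [Option.some.injEq] at hy2e
      have h01 := Int.cast_injective (α := Kbar) hy2e
      omega
    exact ⟨(y1, y2, y3), hy1, hy2, hy3, d12, d13, d23⟩
  -- the pigeonhole map
  have hstdfin : (stdSet Kbar d).Finite := by
    rw [stdSet_eq_coe]
    exact (stdFinset Kbar d).finite_toSet
  haveI : Finite ↥T := hTfin.to_subtype
  haveI : Finite ↥(stdSet Kbar d) := hstdfin.to_subtype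
  have hmemstd : ∀ n (y : ProjLine Kbar), y ∈ (t' n).Y →
      ProjLine.mobius (matBar (M n)) y ∈ stdSet Kbar d := by
    intro n y hy
    rw [← hMY n]
    exact ⟨y, hy, rfl⟩
  set g : ℕ → ↥T × ↥(stdSet Kbar d) × ↥(stdSet Kbar d) × ↥(stdSet Kbar d) := fun n =>
    ⟨⟨t' n, ht'T n⟩,
     ⟨ProjLine.mobius (matBar (M n)) (pick (t' n)).1,
       hmemstd n _ (hpick_spec _ (hex n)).1⟩,
     ⟨ProjLine.mobius (matBar (M n)) (pick (t' n)).2.1,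
       hmemstd n _ (hpick_spec _ (hex n)).2.1⟩,
     ⟨ProjLine.mobius (matBar (M n)) (pick (t' n)).2.2,
       hmemstd n _ (hpick_spec _ (hex n)).2.2.1⟩⟩ with hg_def
  obtain ⟨n, m, hnm, hg⟩ := Finite.exists_ne_map_eq_of_infinite g
  -- unpack the collision
  have ht'eq : t' n = t' m := congrArg (fun x => (x.1 : DynTriple K)) hg
  have hy1 : ProjLine.mobius (matBar (M n)) (pick (t' n)).1
      = ProjLine.mobius (matBar (M m)) (pick (t' m)).1 := by
    have := congrArg (fun x => (x.2.1 : ProjLine Kbar)) hg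
    simpa [hg_def] using this
  have hy2 : ProjLine.mobius (matBar (M n)) (pick (t' n)).2.1
      = ProjLine.mobius (matBar (M m)) (pick (t' m)).2.1 := by
    have := congrArg (fun x => (x.2.2.1 : ProjLine Kbar)) hg
    simpa [hg_def] using this
  have hy3 : ProjLine.mobius (matBar (M n)) (pick (t' n)).2.2
      = ProjLine.mobius (matBar (M m)) (pick (t' m)).2.2 := by
    have := congrArg (fun x => (x.2.2.2 : ProjLine Kbar)) hg
    simpa [hg_def] using this
  rw [ht'eq] at hy1 hy2 hy3
  obtain ⟨hc1, hc2, hc3, hd12, hd13, hd23⟩ := hpick_spec _ (hex m)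
  -- the two mobius maps agree everywhere
  set A := matBar (M n) with hA
  set B := matBar (M m) with hB
  have hdetA : A.det ≠ 0 := hMdet n
  have hdetB : B.det ≠ 0 := hMdet m
  have hdetBinv : (B⁻¹).det ≠ 0 := by
    rw [Matrix.det_nonsing_inv, Ring.inverse_eq_inv]
    exact inv_ne_zero hdetB
  have hdetC : (B⁻¹ * A).det ≠ 0 := by
    rw [Matrix.det_mul]
    exact mul_ne_zero hdetBinv hdetA
  have hfix : ∀ y : ProjLine Kbar,
      ProjLine.mobius A y = ProjLine.mobius B y →
      ProjLine.mobius (B⁻¹ * A) y = y := by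
    intro y h
    rw [ProjLine.mobius_mul _ _ hdetA, h, ProjLine.mobius_inv_left hdetB]
  have hAB : ∀ P, ProjLine.mobius A P = ProjLine.mobius B P := by
    intro P
    have hid := ProjLine.mobius_eq_id_of_fix_three hdetC hd12 hd13 hd23
      (hfix _ hy1) (hfix _ hy2) (hfix _ hy3) P
    have h0 : B * (B⁻¹ * A) = A := by
      rw [← Matrix.mul_assoc, Matrix.mul_nonsing_inv _ (isUnit_iff_ne_zero.2 hdetB),
        Matrix.one_mul]
    have h1 := ProjLine.mobius_mul B (B⁻¹ * A) hdetC P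
    rw [h0, hid] at h1
    exact h1
  -- hence the two maps f_{a n} and f_{a m} agree everywhere
  have hmaps : ∀ Q, ProjLine.eval d (polyBar (fNum K d (a n))) (polyBar (fDen K d)) Q
      = ProjLine.eval d (polyBar (fNum K d (a m))) (polyBar (fDen K d)) Q := by
    intro Q
    obtain ⟨P, rfl⟩ := ProjLine.mobius_surjective hdetA Q
    rw [← hcomm n P]
    have hcm := hcomm m P
    rw [← ht'eq] at hcm
    rw [hAB P, ← hcm]
    exact hAB _
  have hQd := hmaps (some ((d : ℕ) : Kbar))
  rw [polyBar_fNum, polyBar_fNum, polyBar_fDen] at hQd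
  have : algebraMap K Kbar (a n) = algebraMap K Kbar (a m) := eq_of_eval_eq_at_d hQd
  exact hnm (hainj ((algebraMap K Kbar).injective this))

end GRaux
end
/-- **Proposition 4.1(c).**  Let `d ≥ 2` and let `S` be the set of primes of `K`
dividing `(2d-2)!`.  The triples `(f_a, X, X)` for `a ∈ R_S^×` all lie in
`GR¹_d[2d](K,S)` and represent infinitely many distinct `PGL₂(R_S)`-equivalence
classes; in particular `GR¹_d[2d](K,S)/PGL₂(R_S)` is infinite. -/
theorem GR_weight_two_d_infinite
    (K : Type*) [Field K] [NumberField K]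
    (d : ℕ) (hd : 2 ≤ d)
    (S : Set (NFPlace K))
    (hS : S = {v : NFPlace K | v.valuation K ((Nat.factorial (2 * d - 2) : K)) ≠ 1}) :
    (∀ a : K, SUnit S a →
      MemGR S d (2 * d)
        ⟨fNum K d a, fDen K d,
          stdSet (AlgebraicClosure K) d, stdSet (AlgebraicClosure K) d⟩) ∧
    ¬ ∃ T : Set (DynTriple K), T.Finite ∧
        ∀ a : K, SUnit S a →
          ∃ t' ∈ T, TripleEquiv S d
            ⟨fNum K d a, fDen K d,
              stdSet (AlgebraicClosure K) d, stdSet (AlgebraicClosure K) d⟩ t' := by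
  constructor
  · intro a ha
    exact GRaux.memGR_f hd hS ha
  · exact GRaux.part2 hd hS

end
end

section
/- Let d ≥ 3 and let K be an algebraically closed field of characteristic 0. For a tuple 𝐚 = (a_0, a_1, …, a_{d−2}, a_d) with a_0 ≠ 0 and a_d ≠ 0, define the degree-d rational map f_𝐚(x) = (a_0x^d + a_1x^{d−1} + ⋯ + a_{d−2}x^2 + x + a_d)/x on P^1 over K. Suppose 𝐚 and 𝐛 are two such tuples with the property that ∞ is the only fixed point of f_𝐚 at which f_𝐚 is ramified, and likewise ∞ is the only ramified fixed point of f_𝐛. If φ ∈ PGL_2(K) satisfies φ^{-1} ∘ f_𝐚 ∘ φ = f_𝐛, then φ is the identity and 𝐚 = 𝐛. -/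
open Polynomial
open scoped Classical

noncomputable section
open Polynomial

/-- The numerator `a₀x^d + a₁x^{d-1} + ⋯ + a_{d-2}x² + x + a_d` of the map `f_𝐚` of
Proposition 5.1 (note there is no `a_{d-1}` term: the coefficient of `x` is `1`). -/
def tuplePoly (L : Type*) [Field L] (d : ℕ) (a : ℕ → L) : L[X] :=
  (∑ i ∈ Finset.range (d - 1), C (a i) * X ^ (d - i)) + X + C (a d)

end

noncomputable section
open Polynomial

section Helpers

variable {L : Type*} [Field L]

lemma tuplePoly_coeff (d : ℕ) (a : ℕ → L) (k : ℕ) :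
    (tuplePoly L d a).coeff k =
      (if 2 ≤ k ∧ k ≤ d then a (d - k) else 0)
        + (if k = 1 then 1 else 0) + (if k = 0 then a d else 0) := by
  unfold tuplePoly
  rw [coeff_add, coeff_add, finset_sum_coeff]
  congr 2
  · by_cases h : 2 ≤ k ∧ k ≤ d
    · rw [if_pos h]
      rw [Finset.sum_eq_single_of_mem (d - k) (Finset.mem_range.mpr (by omega))]
      · rw [coeff_C_mul, coeff_X_pow, if_pos (by omega), mul_one]
      · intro i hi hne
        rw [Finset.mem_range] at hi
        rw [coeff_C_mul, coeff_X_pow, if_neg (by omega), mul_zero]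
    · rw [if_neg h]
      apply Finset.sum_eq_zero
      intro i hi
      rw [Finset.mem_range] at hi
      rw [coeff_C_mul, coeff_X_pow, if_neg (by omega), mul_zero]
  · rw [coeff_X]
    by_cases h : k = 1
    · rw [if_pos h, if_pos h.symm]
    · rw [if_neg h, if_neg (fun h' => h h'.symm)]
  · exact coeff_C

lemma tuplePoly_natDegree_le (d : ℕ) (a : ℕ → L) (hd : 3 ≤ d) :
    (tuplePoly L d a).natDegree ≤ d := by
  apply natDegree_le_iff_coeff_eq_zero.mpr
  intro N hN
  rw [tuplePoly_coeff, if_neg (by omega), if_neg (by omega), if_neg (by omega)]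
  ring

end Helpers

/-- **Proposition 5.1 (generic injectivity of `𝐚 ↦ ⟨f_𝐚⟩`, case `d ≥ 3`).**  Let
`f_𝐚(x) = (a₀x^d + ⋯ + a_{d-2}x² + x + a_d)/x` with `a₀, a_d ≠ 0`, and similarly
`f_𝐛`.  Assume that for each of `f_𝐚` and `f_𝐛` the point `∞` is the only ramified
fixed point.  If `φ ∈ PGL₂` conjugates `f_𝐚` to `f_𝐛`, then `φ` is the identity and
`𝐚 = 𝐛`. -/


theorem tuple_family_injective
    (L : Type*) [Field L] [IsAlgClosed L] [CharZero L]
    (d : ℕ) (hd : 3 ≤ d)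
    (a b : ℕ → L) (ha0 : a 0 ≠ 0) (had : a d ≠ 0) (hb0 : b 0 ≠ 0) (hbd : b d ≠ 0)
    (hra : ∀ P : ProjLine L,
      ProjLine.eval d (tuplePoly L d a) (X : L[X]) P = P →
      2 ≤ ProjLine.ram d (tuplePoly L d a) (X : L[X]) P → P = none)
    (hrb : ∀ P : ProjLine L,
      ProjLine.eval d (tuplePoly L d b) (X : L[X]) P = P →
      2 ≤ ProjLine.ram d (tuplePoly L d b) (X : L[X]) P → P = none)
    (M : Matrix (Fin 2) (Fin 2) L) (hM : M.det ≠ 0)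
    (hconj : ∀ P : ProjLine L,
      ProjLine.mobius M (ProjLine.eval d (tuplePoly L d b) (X : L[X]) P)
        = ProjLine.eval d (tuplePoly L d a) (X : L[X]) (ProjLine.mobius M P)) :
    (∀ P : ProjLine L, ProjLine.mobius M P = P) ∧
    (∀ i, i ≤ d - 2 → a i = b i) ∧ a d = b d := by
  classical
  set pa := tuplePoly L d a with hpa_def
  set pb := tuplePoly L d b with hpb_def
  have hdet : M 0 0 * M 1 1 - M 0 1 * M 1 0 ≠ 0 := by
    rwa [Matrix.det_fin_two] at hM
  have hpa0 : pa.coeff 0 = a d := by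
    rw [hpa_def, tuplePoly_coeff, if_neg (by omega), if_neg (by omega), if_pos rfl]; ring
  have hpb0 : pb.coeff 0 = b d := by
    rw [hpb_def, tuplePoly_coeff, if_neg (by omega), if_neg (by omega), if_pos rfl]; ring
  have hpa1 : pa.coeff 1 = 1 := by
    rw [hpa_def, tuplePoly_coeff, if_neg (by omega), if_pos rfl, if_neg (by omega)]; ring
  have hpb1 : pb.coeff 1 = 1 := by
    rw [hpb_def, tuplePoly_coeff, if_neg (by omega), if_pos rfl, if_neg (by omega)]; ring
  have hpad : pa.coeff d = a 0 := by
    rw [hpa_def, tuplePoly_coeff, if_pos ⟨by omega, le_refl d⟩, if_neg (by omega),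
      if_neg (by omega), Nat.sub_self]; ring
  have hpbd : pb.coeff d = b 0 := by
    rw [hpb_def, tuplePoly_coeff, if_pos ⟨by omega, le_refl d⟩, if_neg (by omega),
      if_neg (by omega), Nat.sub_self]; ring
  have hdeg_a : pa.natDegree < d + 1 := Nat.lt_succ_of_le (tuplePoly_natDegree_le d a hd)
  have hpb_eval0 : pb.eval 0 = b d := by rw [← coeff_zero_eq_eval_zero, hpb0]
  -- Step 1 : M 1 0 = 0
  have hγ : M 1 0 = 0 := by
    by_contra hγ
    set z : L := -(M 1 1 / M 1 0) with hz_def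
    set A : L[X] := C (M 0 0) * X + C (M 0 1) with hA_def
    set Bm : L[X] := C (M 1 0) * X + C (M 1 1) with hB_def
    set N : L[X] := C (M 0 0) * pb + C (M 0 1) * X with hN_def
    set D : L[X] := C (M 1 0) * pb + C (M 1 1) * X with hD_def
    set P : L[X] := ∑ j ∈ Finset.range (d + 1), C (pa.coeff j) * A ^ j * Bm ^ (d - j)
      with hP_def
    have hBz : Bm.eval z = 0 := by
      rw [hB_def]; simp only [eval_add, eval_mul, eval_C, eval_X, hz_def]
      field_simp
      ring
    have hBz' : M 1 0 * z + M 1 1 = 0 := by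
      have := hBz; rw [hB_def] at this; simp only [eval_add, eval_mul, eval_C, eval_X] at this
      exact this
    have hBm_factor : Bm = C (M 1 0) * (X - C z) := by
      rw [hB_def, mul_sub, ← C_mul, hz_def]
      have h1 : M 1 0 * -(M 1 1 / M 1 0) = -(M 1 1) := by
        field_simp
      rw [h1, C_neg, sub_neg_eq_add]
    have hAz : A.eval z ≠ 0 := by
      intro h
      rw [hA_def] at h; simp only [eval_add, eval_mul, eval_C, eval_X] at h
      apply hdet
      have h2 : M 0 0 * (M 1 0 * z + M 1 1) - M 1 0 * (M 0 0 * z + M 0 1)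
          = M 0 0 * M 1 1 - M 0 1 * M 1 0 := by ring
      rw [← h2, hBz', h, mul_zero, mul_zero, sub_zero]
    have hD_coeff : D.coeff d = M 1 0 * b 0 := by
      rw [hD_def, coeff_add, coeff_C_mul, coeff_C_mul, hpbd, coeff_X, if_neg (by omega)]
      ring
    have hD_ne : D ≠ 0 := by
      intro h
      rw [h, coeff_zero] at hD_coeff
      exact (mul_ne_zero hγ hb0) hD_coeff.symm
    have hBm_ne : Bm ≠ 0 := by
      intro h
      have : Bm.coeff 1 = M 1 0 := by
        rw [hB_def, coeff_add, coeff_C_mul, coeff_X, if_pos rfl, coeff_C, if_neg (by omega)]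
        ring
      rw [h, coeff_zero] at this
      exact hγ this.symm
    -- the key polynomial identity
    have hstar : P * D = N * A * Bm ^ (d - 1) := by
      apply eq_of_infinite_eval_eq
      have hnz : (X * Bm * D : L[X]) ≠ 0 := mul_ne_zero (mul_ne_zero X_ne_zero hBm_ne) hD_ne
      have hfin : {x : L | (X * Bm * D : L[X]).IsRoot x}.Finite :=
        Polynomial.finite_setOf_isRoot hnz
      apply Set.Infinite.mono _ hfin.infinite_compl
      intro x hx
      simp only [Set.mem_compl_iff, Set.mem_setOf_eq, IsRoot, eval_mul, eval_X,
        mul_eq_zero, not_or] at hx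
      obtain ⟨⟨hx0, hBx⟩, hDx⟩ := hx
      have hBxv : Bm.eval x = M 1 0 * x + M 1 1 := by
        rw [hB_def]; simp only [eval_add, eval_mul, eval_C, eval_X]
      have hAxv : A.eval x = M 0 0 * x + M 0 1 := by
        rw [hA_def]; simp only [eval_add, eval_mul, eval_C, eval_X]
      have hDxv : D.eval x = M 1 0 * pb.eval x + M 1 1 * x := by
        rw [hD_def]; simp only [eval_add, eval_mul, eval_C, eval_X]
      have hNxv : N.eval x = M 0 0 * pb.eval x + M 0 1 * x := by
        rw [hN_def]; simp only [eval_add, eval_mul, eval_C, eval_X]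
      have h := hconj (some x)
      have hden1 : M 1 0 * (pb.eval x / x) + M 1 1 ≠ 0 := by
        intro h0
        apply hDx
        rw [hDxv]
        field_simp at h0
        linear_combination h0
      have hBx' : M 1 0 * x + M 1 1 ≠ 0 := by rwa [hBxv] at hBx
      simp only [ProjLine.eval, ProjLine.evalAt, ProjLine.mobius, eval_X, if_neg hx0,
        if_neg hden1, if_neg hBx'] at h
      obtain ⟨u, hu_def⟩ : ∃ u : L, u = (M 0 0 * x + M 0 1) / (M 1 0 * x + M 1 1) :=
        ⟨_, rfl⟩
      rw [← hu_def] at h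
      have hu : u ≠ 0 := by
        intro h0
        rw [h0, if_pos rfl] at h
        exact Option.some_ne_none _ h
      rw [if_neg hu, Option.some_inj] at h
      have hAx : A.eval x ≠ 0 := by
        intro h0
        apply hu
        rw [hu_def, ← hAxv, ← hBxv, h0, zero_div]
      -- eval of P
      have hPx : P.eval x = pa.eval u * Bm.eval x ^ d := by
        rw [hP_def, eval_finset_sum, eval_eq_sum_range' hdeg_a u, Finset.sum_mul]
        apply Finset.sum_congr rfl
        intro j hj
        rw [Finset.mem_range] at hj
        rw [eval_mul, eval_mul, eval_C, eval_pow, eval_pow]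
        rw [hu_def, ← hAxv, ← hBxv, div_pow,
          show Bm.eval x ^ d = Bm.eval x ^ j * Bm.eval x ^ (d - j) by
            rw [← pow_add]; congr 1; omega]
        field_simp
      -- the cross relation from h
      have hu_eq : A.eval x = u * Bm.eval x := by
        rw [hAxv, hBxv, hu_def, div_mul_cancel₀ _ hBx']
      have hcross0 : (M 0 0 * (pb.eval x / x) + M 0 1) * u
          = pa.eval u * (M 1 0 * (pb.eval x / x) + M 1 1) := by
        rw [div_eq_div_iff hden1 hu] at h
        exact h
      have e1 : (M 0 0 * (pb.eval x / x) + M 0 1) * x = N.eval x := by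
        rw [hNxv]; field_simp
      have e2 : (M 1 0 * (pb.eval x / x) + M 1 1) * x = D.eval x := by
        rw [hDxv]; field_simp
      have hcross : N.eval x * u = pa.eval u * D.eval x := by
        calc N.eval x * u = ((M 0 0 * (pb.eval x / x) + M 0 1) * x) * u := by rw [e1]
          _ = ((M 0 0 * (pb.eval x / x) + M 0 1) * u) * x := by ring
          _ = (pa.eval u * (M 1 0 * (pb.eval x / x) + M 1 1)) * x := by rw [hcross0]
          _ = pa.eval u * ((M 1 0 * (pb.eval x / x) + M 1 1) * x) := by ring
          _ = pa.eval u * D.eval x := by rw [e2]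
      show eval x (P * D) = eval x (N * A * Bm ^ (d - 1))
      rw [eval_mul, eval_mul, eval_mul, eval_pow, hPx, hu_eq]
      rw [show Bm.eval x ^ d = Bm.eval x ^ (d - 1) * Bm.eval x by
        rw [← pow_succ]; congr 1; omega]
      linear_combination (-(Bm.eval x ^ (d - 1) * Bm.eval x)) * hcross
    -- divisibility
    have hprime : Prime (X - C z : L[X]) := prime_X_sub_C z
    have hdvd1 : (X - C z : L[X]) ^ (d - 1) ∣ P * D := by
      rw [hstar, hBm_factor, mul_pow]
      exact ⟨N * A * C (M 1 0) ^ (d - 1), by ring⟩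
    have hPz : P.eval z = a 0 * A.eval z ^ d := by
      rw [hP_def, eval_finset_sum]
      rw [Finset.sum_eq_single_of_mem d (Finset.self_mem_range_succ d)]
      · rw [eval_mul, eval_mul, eval_C, eval_pow, eval_pow, Nat.sub_self, pow_zero,
          mul_one, hpad]
      · intro j hj hne
        rw [Finset.mem_range] at hj
        rw [eval_mul, eval_pow, hBz, zero_pow (by omega), mul_zero]
    have hndvd : ¬ (X - C z : L[X]) ∣ P := by
      intro hdvd
      have : P.eval z = 0 := dvd_iff_isRoot.mp hdvd
      rw [hPz] at this
      exact (mul_ne_zero ha0 (pow_ne_zero d hAz)) this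
    have hdvdD : (X - C z : L[X]) ^ (d - 1) ∣ D :=
      hprime.pow_dvd_of_dvd_mul_left _ hndvd hdvd1
    have hDz : D.eval z = 0 := by
      have h1 : (X - C z : L[X]) ∣ D := (dvd_pow_self _ (by omega : d - 1 ≠ 0)).trans hdvdD
      exact dvd_iff_isRoot.mp h1
    have hDz' : M 1 0 * pb.eval z + M 1 1 * z = 0 := by
      have := hDz; rw [hD_def] at this
      simp only [eval_add, eval_mul, eval_C, eval_X] at this
      exact this
    have hz0 : z ≠ 0 := by
      intro h0
      rw [h0] at hDz'
      rw [mul_zero, add_zero, mul_eq_zero] at hDz'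
      rcases hDz' with h1 | h1
      · exact hγ h1
      · rw [hpb_eval0] at h1; exact hbd h1
    have hpbz : pb.eval z = z * z := by
      have h3 : M 1 0 * (pb.eval z - z * z) = 0 := by
        linear_combination hDz' - z * hBz'
      rcases mul_eq_zero.mp h3 with h1 | h1
      · exact absurd h1 hγ
      · linear_combination h1
    have hfix : ProjLine.eval d pb X (some z) = some z := by
      show ProjLine.evalAt pb X z = some z
      rw [ProjLine.evalAt, eval_X, if_neg hz0, hpbz]
      congr 1
      field_simp
    have hram : 2 ≤ ProjLine.ram d pb X (some z) := by
      show 2 ≤ ProjLine.ramAt pb X z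
      rw [ProjLine.ramAt, eval_X, if_neg hz0]
      have hfac : C z * pb - C (pb.eval z) * X = C (z / M 1 0) * D := by
        rw [hpbz, hD_def]
        have c1 : C (z / M 1 0) * C (M 1 0) = C z := by
          rw [← C_mul, div_mul_cancel₀ _ hγ]
        have c2 : C (z / M 1 0) * C (M 1 1) = C (-(z * z)) := by
          rw [← C_mul]
          congr 1
          have hδz : M 1 1 = -(M 1 0 * z) := by linear_combination hBz'
          rw [hδz]
          field_simp
        calc C z * pb - C (z * z) * X
            = (C (z / M 1 0) * C (M 1 0)) * pb + (C (z / M 1 0) * C (M 1 1)) * X := by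
              rw [c1, c2]; simp only [map_neg]; ring
          _ = C (z / M 1 0) * (C (M 1 0) * pb + C (M 1 1) * X) := by ring
      rw [hfac]
      have hcne : (C (z / M 1 0) * D : L[X]) ≠ 0 :=
        mul_ne_zero (by simpa using div_ne_zero hz0 hγ) hD_ne
      have h2 : (d - 1) ≤ rootMultiplicity z (C (z / M 1 0) * D) :=
        (le_rootMultiplicity_iff hcne).mpr (hdvdD.mul_left _)
      omega
    have := hrb (some z) hfix hram
    exact Option.some_ne_none _ this
  -- Step 2 : M 1 1 ≠ 0, M 0 0 ≠ 0, M 0 1 = 0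
  have hδ : M 1 1 ≠ 0 := by
    intro h
    apply hM
    rw [Matrix.det_fin_two, hγ, h]
    ring
  have hα : M 0 0 ≠ 0 := by
    intro h
    apply hM
    rw [Matrix.det_fin_two, hγ, h]
    ring
  have hβ : M 0 1 = 0 := by
    have h := hconj (some 0)
    have e0 : ProjLine.eval d pb X (some 0) = none := by
      show ProjLine.evalAt pb X 0 = none
      rw [ProjLine.evalAt, eval_X, if_pos rfl]
    rw [e0] at h
    have e1 : ProjLine.mobius M (none : ProjLine L) = none := by
      show (if M 1 0 = 0 then (none : ProjLine L) else some (M 0 0 / M 1 0)) = none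
      rw [if_pos hγ]
    rw [e1] at h
    have h1 : M 1 0 * (0 : L) + M 1 1 ≠ 0 := by rw [hγ]; simpa using hδ
    have e2 : ProjLine.mobius M (some (0 : L)) = some (M 0 1 / M 1 1) := by
      show (if M 1 0 * 0 + M 1 1 = 0 then (none : ProjLine L)
        else some ((M 0 0 * 0 + M 0 1) / (M 1 0 * 0 + M 1 1))) = some (M 0 1 / M 1 1)
      rw [if_neg h1, mul_zero, zero_add, mul_zero, zero_add]
    rw [e2] at h
    by_contra hβ0
    have h2 : M 0 1 / M 1 1 ≠ 0 := div_ne_zero hβ0 hδ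
    have e3 : ProjLine.eval d pa X (some (M 0 1 / M 1 1))
        = some (pa.eval (M 0 1 / M 1 1) / (M 0 1 / M 1 1)) := by
      show ProjLine.evalAt pa X _ = _
      rw [ProjLine.evalAt, eval_X, if_neg h2]
    rw [e3] at h
    exact Option.some_ne_none _ h.symm
  obtain ⟨s, hs_def⟩ : ∃ s : L, s = M 0 0 / M 1 1 := ⟨_, rfl⟩
  have hs : s ≠ 0 := hs_def ▸ div_ne_zero hα hδ
  -- the scaling identity
  have hid : (∑ j ∈ Finset.range (d + 1), C (pa.coeff j * s ^ j) * X ^ j) * X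
      = (C (s ^ 2) * pb) * X := by
    apply eq_of_infinite_eval_eq
    apply Set.Infinite.mono _ (Set.finite_singleton (0 : L)).infinite_compl
    intro x hx
    have hx0 : x ≠ 0 := by simpa [Set.mem_compl_iff] using hx
    have h := hconj (some x)
    have e0 : ProjLine.eval d pb X (some x) = some (pb.eval x / x) := by
      show ProjLine.evalAt pb X x = _
      rw [ProjLine.evalAt, eval_X, if_neg hx0]
    rw [e0] at h
    have hden : ∀ w : L, M 1 0 * w + M 1 1 ≠ 0 := fun w => by rw [hγ]; simpa using hδ
    have e1 : ∀ w : L, ProjLine.mobius M (some w) = some (s * w) := by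
      intro w
      show (if M 1 0 * w + M 1 1 = 0 then (none : ProjLine L)
        else some ((M 0 0 * w + M 0 1) / (M 1 0 * w + M 1 1))) = some (s * w)
      rw [if_neg (hden w)]
      congr 1
      rw [hγ, hβ, hs_def]
      rw [zero_mul, add_zero, zero_add, div_mul_eq_mul_div]
    rw [e1, e1] at h
    have hsx : s * x ≠ 0 := mul_ne_zero hs hx0
    have e2 : ProjLine.eval d pa X (some (s * x))
        = some (pa.eval (s * x) / (s * x)) := by
      show ProjLine.evalAt pa X _ = _
      rw [ProjLine.evalAt, eval_X, if_neg hsx]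
    rw [e2, Option.some_inj] at h
    show eval x ((∑ j ∈ Finset.range (d + 1), C (pa.coeff j * s ^ j) * X ^ j) * X)
      = eval x (C (s ^ 2) * pb * X)
    rw [eval_mul, eval_mul, eval_mul, eval_finset_sum, eval_X, eval_C]
    have hsum : (∑ j ∈ Finset.range (d + 1), (C (pa.coeff j * s ^ j) * X ^ j).eval x)
        = pa.eval (s * x) := by
      rw [eval_eq_sum_range' hdeg_a (s * x)]
      apply Finset.sum_congr rfl
      intro j hj
      rw [eval_mul, eval_C, eval_pow, eval_X, mul_pow]
      ring
    rw [hsum]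
    have h3 : pa.eval (s * x) = s * (pb.eval x / x) * (s * x) :=
      (div_eq_iff hsx).mp h.symm
    rw [h3]
    field_simp
  have hid2 : (∑ j ∈ Finset.range (d + 1), C (pa.coeff j * s ^ j) * X ^ j)
      = C (s ^ 2) * pb := mul_right_cancel₀ X_ne_zero hid
  have hcoeffs : ∀ k, k ≤ d → pa.coeff k * s ^ k = s ^ 2 * pb.coeff k := by
    intro k hk
    have h := congrArg (fun p : L[X] => p.coeff k) hid2
    simp only [finset_sum_coeff, coeff_C_mul, coeff_X_pow, mul_ite, mul_one, mul_zero] at h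
    rwa [Finset.sum_ite_eq (Finset.range (d + 1)) k (fun j => pa.coeff j * s ^ j),
      if_pos (Finset.mem_range.mpr (by omega))] at h
  have hs1 : s = 1 := by
    have h := hcoeffs 1 (by omega)
    rw [hpa1, hpb1, one_mul, mul_one, pow_one, pow_two] at h
    have h2 : s * 1 = s * s := by rw [mul_one]; exact h
    exact (mul_left_cancel₀ hs h2).symm
  have hαδ : M 0 0 = M 1 1 := by
    rw [hs_def, div_eq_one_iff_eq hδ] at hs1
    exact hs1
  have hcoeff_eq : ∀ k, k ≤ d → pa.coeff k = pb.coeff k := by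
    intro k hk
    have h := hcoeffs k hk
    rwa [hs1, one_pow, one_pow, mul_one, one_mul] at h
  refine ⟨?_, ?_, ?_⟩
  · intro P
    cases P with
    | none => simp [ProjLine.mobius, hγ]
    | some x =>
      simp only [ProjLine.mobius, hγ, hβ, hαδ, zero_mul, zero_add, add_zero]
      rw [if_neg hδ]
      congr 1
      rw [mul_comm, mul_div_assoc, div_self hδ, mul_one]
  · intro i hi
    have h := hcoeff_eq (d - i) (by omega)
    have c1 : 2 ≤ d - i ∧ d - i ≤ d := ⟨by omega, by omega⟩
    have c2 : ¬(d - i = 1) := by omega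
    have c3 : ¬(d - i = 0) := by omega
    have ea : pa.coeff (d - i) = a i := by
      rw [hpa_def, tuplePoly_coeff, if_pos c1, if_neg c2, if_neg c3,
        show d - (d - i) = i by omega]
      ring
    have eb : pb.coeff (d - i) = b i := by
      rw [hpb_def, tuplePoly_coeff, if_pos c1, if_neg c2, if_neg c3,
        show d - (d - i) = i by omega]
      ring
    rw [ea, eb] at h
    exact h
  · have h := hcoeff_eq 0 (by omega)
    rwa [hpa0, hpb0] at h

end
end
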